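/- arXiv:2307.03627 — 3 statements merged into one kernel-verified Lean document; each statement's English description precedes it below -/
import Mathlib

section
/- Let F be a free group of rank n ≥ 2 with free generating set X, and let d be a positive integer divisible by 4. Then there exists a distinct difference configuration in F of diameter at most d and cardinality 2n(2n−1)^{d/4−1}. -/
namespace DDCAux

open List FreeGroup

variable {α : Type*} [DecidableEq α]

/-- The letter relation: `y` does not cancel `x`. -/
def R (x y : α × Bool) : Prop := x ≠ (y.1, !y.2)

instance : ∀ x y : α × Bool, Decidable (R x y) := fun x y => by unfold R; infer_instance

def invp (x : α × Bool) : α × Bool := (x.1, !x.2)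

theorem R_refl (x : α × Bool) : R x x := by
  obtain ⟨x1, x2⟩ := x
  cases x2 <;> simp [R, Prod.ext_iff]

theorem R_symm {x y : α × Bool} (h : R x y) : R y x := by
  obtain ⟨x1, x2⟩ := x; obtain ⟨y1, y2⟩ := y
  cases x2 <;> cases y2 <;> simp_all [R, Prod.ext_iff] <;> exact fun h' => h h'.symm

theorem R_invp {x y : α × Bool} (h : R x y) : R (invp x) (invp y) := by
  obtain ⟨x1, x2⟩ := x; obtain ⟨y1, y2⟩ := y
  cases x2 <;> cases y2 <;> simp_all [R, invp, Prod.ext_iff]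

theorem R_of_ne {a b : α × Bool} (h : a ≠ b) : R (invp a) b := by
  obtain ⟨a1, a2⟩ := a; obtain ⟨b1, b2⟩ := b
  cases a2 <;> cases b2 <;> simp_all [R, invp, Prod.ext_iff]

theorem chain'_reverse_iff {L : List (α × Bool)} : Chain' R L.reverse ↔ Chain' R L := by
  simp only [Chain']; rw [List.isChain_reverse]
  constructor
  · exact fun h => h.imp fun _ _ => R_symm
  · exact fun h => h.imp fun _ _ => R_symm

theorem chain'_map_invp {L : List (α × Bool)} (h : Chain' R L) : Chain' R (L.map invp) := by
  simp only [Chain'] at h ⊢; rw [List.isChain_map]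
  exact h.imp fun _ _ => R_invp

theorem chain'_invRev {L : List (α × Bool)} (h : Chain' R L) : Chain' R (invRev L) := by
  unfold FreeGroup.invRev
  rw [chain'_reverse_iff]
  exact chain'_map_invp h

theorem invRev_def (L : List (α × Bool)) : invRev L = (L.map invp).reverse := rfl

theorem invRev_reverse (L : List (α × Bool)) : invRev L.reverse = L.map invp := by
  rw [invRev_def, List.map_reverse, List.reverse_reverse]

theorem head?_invRev (L : List (α × Bool)) : (invRev L).head? = Option.map invp L.getLast? := by
  rw [invRev_def, List.head?_reverse, List.getLast?_map]

theorem getLast?_invRev (L : List (α × Bool)) :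
    (invRev L).getLast? = Option.map invp L.head? := by
  rw [invRev_def, List.getLast?_reverse, List.head?_map]

theorem reduce_eq_self {L : List (α × Bool)} (h : Chain' R L) : reduce L = L := by
  induction L with
  | nil => rfl
  | cons x L ih =>
    rw [FreeGroup.reduce.cons, ih h.tail]
    cases L with
    | nil => rfl
    | cons y t =>
      have hr : R x y := (List.isChain_cons_cons.mp h).1
      have : ¬(x.1 = y.1 ∧ x.2 = !y.2) := by
        rintro ⟨h1, h2⟩
        exact hr (Prod.ext h1 h2)
      simp only [this, if_false]

theorem toWord_mk_eq {L : List (α × Bool)} (h : Chain' R L) : (mk L).toWord = L := by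
  rw [FreeGroup.toWord_mk, reduce_eq_self h]

/-- A reduced word followed by its reverse is reduced. -/
theorem chain'_palindrome {w : List (α × Bool)} (h : Chain' R w) :
    Chain' R (w ++ w.reverse) := by
  simp only [Chain'] at h ⊢; rw [List.isChain_append]
  refine ⟨h, chain'_reverse_iff.mpr h, ?_⟩
  intro x hx y hy
  rw [List.head?_reverse] at hy
  rw [hx] at hy
  cases hy
  exact R_refl x

theorem decomp : ∀ (w u : List (α × Bool)), w.length = u.length → w ≠ u →
    ∃ p a b w₂ u₂, w = p ++ a :: w₂ ∧ u = p ++ b :: u₂ ∧ a ≠ b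
  | [], [], _, hne => absurd rfl hne
  | [], _ :: _, hl, _ => by simp at hl
  | _ :: _, [], hl, _ => by simp at hl
  | a :: w, b :: u, hl, hne => by
    by_cases hab : a = b
    · subst hab
      have hwu : w ≠ u := fun h => hne (by rw [h])
      obtain ⟨p, a', b', w₂, u₂, h1, h2, h3⟩ := decomp w u (by simpa using hl) hwu
      exact ⟨a :: p, a', b', w₂, u₂, by simp [h1], by simp [h2], h3⟩
    · exact ⟨[], a, b, w, u, rfl, rfl, hab⟩

/-- The reduced word of the "difference" of two palindromized words. -/
theorem toWord_diff {w u : List (α × Bool)} (hw : Chain' R w) (hu : Chain' R u)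
    (hl : w.length = u.length) (hne : w ≠ u) :
    ∃ m, ((mk (w ++ w.reverse))⁻¹ * mk (u ++ u.reverse)).toWord
      = w.map invp ++ (m ++ u.reverse) := by
  obtain ⟨p, a, b, w₂, u₂, hwd, hud, hab⟩ := decomp w u hl hne
  refine ⟨invRev (a :: w₂) ++ (b :: u₂), ?_⟩
  set M : List (α × Bool) := w.map invp ++ ((invRev (a :: w₂) ++ (b :: u₂)) ++ u.reverse)
    with hM
  have hMchain : Chain' R M := by
    rw [hM]; simp only [Chain'] at hw hu ⊢; rw [List.isChain_append]
    refine ⟨chain'_map_invp hw, ?_, ?_⟩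
    · rw [List.isChain_append]
      refine ⟨?_, ?_, ?_⟩
      · rw [List.isChain_append]
        refine ⟨chain'_invRev ?_, ?_, ?_⟩
        · rw [hwd, List.isChain_append] at hw
          exact hw.2.1
        · rw [hud, List.isChain_append] at hu
          exact hu.2.1
        · intro x hx y hy
          rw [getLast?_invRev] at hx
          simp only [List.head?_cons, Option.map_some, Option.mem_def,
            Option.some.injEq] at hx hy
          subst hx; subst hy
          exact R_of_ne hab
      · exact chain'_reverse_iff.mpr hu
      · intro x hx y hy
        rw [List.getLast?_append] at hx
        have h1 : (b :: u₂ : List (α × Bool)).getLast? = some ((b :: u₂).getLast (by simp)) :=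
          List.getLast?_eq_getLast (by simp)
        rw [h1] at hx
        simp only [Option.some_or, Option.mem_def, Option.some.injEq] at hx
        rw [List.head?_reverse, hud, List.getLast?_append, h1] at hy
        simp only [Option.some_or, Option.mem_def, Option.some.injEq] at hy
        subst hx; subst hy
        exact R_refl _
    · intro x hx y hy
      rw [List.getLast?_map] at hx
      have h1 : (a :: w₂ : List (α × Bool)).getLast? = some ((a :: w₂).getLast (by simp)) :=
        List.getLast?_eq_getLast (by simp)
      have h2 : w.getLast? = (a :: w₂ : List (α × Bool)).getLast? := by
        rw [hwd, List.getLast?_append, h1]; simp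
      rw [h2, h1] at hx
      simp only [Option.map_some, Option.mem_def, Option.some.injEq] at hx
      rw [List.head?_append, List.head?_append, head?_invRev, h1] at hy
      simp only [Option.map_some, Option.some_or, Option.mem_def, Option.some.injEq] at hy
      subst hx; subst hy
      exact R_refl _
  have hmk : mk M = (mk (w ++ w.reverse))⁻¹ * mk (u ++ u.reverse) := by
    have e1 : mk M = mk (w.map invp) * ((mk (a :: w₂))⁻¹ * (mk (b :: u₂) * mk u.reverse)) := by
      rw [FreeGroup.inv_mk, FreeGroup.mul_mk, FreeGroup.mul_mk, FreeGroup.mul_mk, hM]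
      simp [List.append_assoc]
    have e2 : mk (w.map invp) = (mk w.reverse)⁻¹ := by
      rw [FreeGroup.inv_mk, invRev_reverse]
    have e3 : mk w = mk p * mk (a :: w₂) := by rw [FreeGroup.mul_mk, ← hwd]
    have e4 : mk u = mk p * mk (b :: u₂) := by rw [FreeGroup.mul_mk, ← hud]
    rw [e1, e2, ← FreeGroup.mul_mk, ← FreeGroup.mul_mk, mul_inv_rev, e3, e4]
    group
  rw [← hmk, toWord_mk_eq hMchain, hM]

end DDCAux

section Counting

open List FreeGroup DDCAux

variable {α : Type*} [DecidableEq α] [Fintype α]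

/-- Allowed next letters to prepend to a reduced word. -/
def allowed : List (α × Bool) → Finset (α × Bool)
  | [] => Finset.univ
  | y :: _ => Finset.univ.filter fun x => x ≠ (y.1, !y.2)

theorem mem_allowed {x : α × Bool} {l : List (α × Bool)} :
    x ∈ allowed l ↔ ∀ y ∈ l.head?, R x y := by
  cases l with
  | nil => simp [allowed]
  | cons y t => simp [allowed, R]

theorem card_allowed_nil : (allowed ([] : List (α × Bool))).card = 2 * Fintype.card α := by
  simp [allowed, Fintype.card_prod, mul_comm]

theorem card_allowed_cons (y : α × Bool) (t : List (α × Bool)) :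
    (allowed (y :: t)).card = 2 * Fintype.card α - 1 := by
  rw [allowed, Finset.filter_ne', Finset.card_erase_of_mem (Finset.mem_univ _)]
  simp [Fintype.card_prod, mul_comm]

/-- The finset of reduced words of length `k`. -/
def S : ℕ → Finset (List (α × Bool))
  | 0 => {[]}
  | k + 1 => (S k).biUnion fun l => (allowed l).image fun x => x :: l

theorem mem_S : ∀ {k : ℕ} {l : List (α × Bool)},
    l ∈ (S k : Finset (List (α × Bool))) ↔ l.length = k ∧ Chain' R l := by
  intro k
  induction k with
  | zero => intro l; simp [S, List.length_eq_zero_iff]; rintro rfl; exact List.isChain_nil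
  | succ k ih =>
    intro l
    simp only [S, Finset.mem_biUnion, Finset.mem_image]
    constructor
    · rintro ⟨t, ht, x, hx, rfl⟩
      obtain ⟨hlen, hch⟩ := ih.mp ht
      exact ⟨by simp [hlen], List.isChain_cons.mpr ⟨mem_allowed.mp hx, hch⟩⟩
    · rintro ⟨hlen, hch⟩
      cases l with
      | nil => simp at hlen
      | cons x t =>
        obtain ⟨hh, hch'⟩ := List.isChain_cons.mp hch
        exact ⟨t, ih.mpr ⟨by simpa using hlen, hch'⟩, x, mem_allowed.mpr hh, rfl⟩

theorem card_S_succ (k : ℕ) :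
    ((S (k + 1) : Finset (List (α × Bool)))).card = ∑ l ∈ (S k : Finset (List (α × Bool))), (allowed l).card := by
  rw [S, Finset.card_biUnion, Finset.sum_congr rfl]
  · intro l _
    exact Finset.card_image_of_injective _ fun a b h => by injection h
  · intro l₁ _ l₂ _ hne
    simp only [Finset.disjoint_left, Finset.mem_image]
    rintro a ⟨x, _, rfl⟩ ⟨x', _, h⟩
    injection h with h1 h2
    exact hne h2.symm

theorem card_S (k : ℕ) :
    ((S (k + 1) : Finset (List (α × Bool)))).card
      = 2 * Fintype.card α * (2 * Fintype.card α - 1) ^ k := by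
  induction k with
  | zero =>
    rw [card_S_succ]
    simp [S, card_allowed_nil]
  | succ k ih =>
    rw [card_S_succ]
    have : ∀ l ∈ (S (k + 1) : Finset (List (α × Bool))),
        (allowed l).card = 2 * Fintype.card α - 1 := by
      intro l hl
      obtain ⟨hlen, _⟩ := mem_S.mp hl
      cases l with
      | nil => simp at hlen
      | cons y t => exact card_allowed_cons y t
    rw [Finset.sum_congr rfl this, Finset.sum_const, smul_eq_mul, ih]
    ring

end Counting

/-- A subset `D` of a group is a distinct difference configuration. -/
def IsDDC {G : Type*} [Group G] (D : Set G) : Prop :=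
  ∀ g ∈ D, ∀ h ∈ D, ∀ g' ∈ D, ∀ h' ∈ D,
    g ≠ h → g' ≠ h' → g⁻¹ * h = g'⁻¹ * h' → g = g' ∧ h = h'

theorem stmt7 (α : Type*) [Fintype α] [DecidableEq α] (n : ℕ) (hn : 2 ≤ n)
    (hcard : Fintype.card α = n) (d : ℕ) (hd : 0 < d) (hd4 : 4 ∣ d) :
    ∃ D : Set (FreeGroup α), IsDDC D ∧
      (∀ g ∈ D, ∀ h ∈ D, (g⁻¹ * h).norm ≤ d) ∧
      D.ncard = 2 * n * (2 * n - 1) ^ (d / 4 - 1) := by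
  classical
  open List FreeGroup DDCAux in
  obtain ⟨k, rfl⟩ := hd4
  have hk : 1 ≤ k := by omega
  obtain ⟨j, rfl⟩ : ∃ j, k = j + 1 := ⟨k - 1, by omega⟩
  set f : List (α × Bool) → FreeGroup α := fun w => FreeGroup.mk (w ++ w.reverse) with hf
  refine ⟨↑((S (j + 1) : Finset (List (α × Bool))).image f), ?_, ?_, ?_⟩
  · -- IsDDC
    intro g hg h hh g' hg' h' hh' hgh hg'h' heq
    simp only [Finset.coe_image, Set.mem_image, Finset.mem_coe] at hg hh hg' hh'
    obtain ⟨w, hw, rfl⟩ := hg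
    obtain ⟨u, hu, rfl⟩ := hh
    obtain ⟨w', hw', rfl⟩ := hg'
    obtain ⟨u', hu', rfl⟩ := hh'
    obtain ⟨hwl, hwc⟩ := mem_S.mp hw
    obtain ⟨hul, huc⟩ := mem_S.mp hu
    obtain ⟨hwl', hwc'⟩ := mem_S.mp hw'
    obtain ⟨hul', huc'⟩ := mem_S.mp hu'
    have hwu : w ≠ u := fun e => hgh (by rw [e])
    have hwu' : w' ≠ u' := fun e => hg'h' (by rw [e])
    obtain ⟨m, hm⟩ := toWord_diff hwc huc (by rw [hwl, hul]) hwu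
    obtain ⟨m', hm'⟩ := toWord_diff hwc' huc' (by rw [hwl', hul']) hwu'
    have E : List.map invp w ++ (m ++ u.reverse)
        = List.map invp w' ++ (m' ++ u'.reverse) := by
      rw [← hm, ← hm', heq]
    have hww : w = w' := by
      have := (List.append_inj E (by simp [hwl, hwl'])).1
      exact List.map_injective_iff.mpr
        (fun a b hab => by
          have := congrArg invp hab
          simpa [invp, Prod.ext_iff, Bool.not_not] using this) this
    have E2 := congrArg List.reverse E
    simp only [List.reverse_append, List.reverse_reverse, List.append_assoc] at E2
    have huu : u = u' := (List.append_inj E2 (by rw [hul, hul'])).1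
    exact ⟨by rw [hww], by rw [huu]⟩
  · -- norm bound
    intro g hg h hh
    simp only [Finset.coe_image, Set.mem_image, Finset.mem_coe] at hg hh
    obtain ⟨w, hw, rfl⟩ := hg
    obtain ⟨u, hu, rfl⟩ := hh
    obtain ⟨hwl, _⟩ := mem_S.mp hw
    obtain ⟨hul, _⟩ := mem_S.mp hu
    have h1 : (f w).norm ≤ 2 * (j + 1) := by
      calc (f w).norm ≤ (w ++ w.reverse).length := FreeGroup.norm_mk_le
        _ = 2 * (j + 1) := by simp [hwl]; omega
    have h2 : (f u).norm ≤ 2 * (j + 1) := by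
      calc (f u).norm ≤ (u ++ u.reverse).length := FreeGroup.norm_mk_le
        _ = 2 * (j + 1) := by simp [hul]; omega
    calc ((f w)⁻¹ * f u).norm ≤ (f w)⁻¹.norm + (f u).norm := FreeGroup.norm_mul_le _ _
      _ = (f w).norm + (f u).norm := by rw [FreeGroup.norm_inv_eq]
      _ ≤ 2 * (j + 1) + 2 * (j + 1) := Nat.add_le_add h1 h2
      _ = 4 * (j + 1) := by ring
  · -- cardinality
    have hinj : Set.InjOn f ↑(S (j + 1) : Finset (List (α × Bool))) := by
      intro w hw u hu he
      obtain ⟨hwl, hwc⟩ := mem_S.mp (Finset.mem_coe.mp hw)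
      obtain ⟨hul, huc⟩ := mem_S.mp (Finset.mem_coe.mp hu)
      have : w ++ w.reverse = u ++ u.reverse := by
        rw [← toWord_mk_eq (chain'_palindrome hwc), ← toWord_mk_eq (chain'_palindrome huc)]
        exact congrArg FreeGroup.toWord he
      exact (List.append_inj this (by rw [hwl, hul])).1
    rw [Set.ncard_coe_finset, Finset.card_image_of_injOn hinj, card_S, hcard]
    congr 1
    have : 4 * (j + 1) / 4 = j + 1 := by omega
    rw [this]
    simp
end

section
/- Let F be a free group of rank n ≥ 2. There exists a constant c = 2n(4n²−3n+1) / ((2n−1)^{1/3}((2n−1)^{2/3}−1)) such that every distinct difference configuration D in F of diameter at most d satisfies |D| ≤ c·(2n−1)^{d/3}. -/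
set_option linter.unusedSectionVars false

namespace DDCAux
open List FreeGroup Finset

variable {α : Type*} [DecidableEq α]

/-- no cancellation between adjacent letters -/
def NC (a b : α × Bool) : Prop := ¬(a.1 = b.1 ∧ a.2 = !b.2)

instance : DecidableRel (NC (α := α)) := fun a b => by unfold NC; infer_instance

lemma reduce_eq_self_of_chain : ∀ {l : List (α × Bool)}, l.IsChain NC → FreeGroup.reduce l = l
  | [], _ => rfl
  | [a], _ => rfl
  | a :: b :: t, h => by
    have ht : List.IsChain NC (b :: t) := h.tail
    have := reduce_eq_self_of_chain ht
    rw [FreeGroup.reduce.cons, this]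
    have hab : NC a b := (List.isChain_cons_cons.1 h).1
    simp only [NC] at hab
    simp [hab]

lemma chain'_reduce (l : List (α × Bool)) : List.IsChain NC (FreeGroup.reduce l) := by
  induction l with
  | nil => simp
  | cons a l ih =>
    rw [FreeGroup.reduce.cons]
    rcases hr : FreeGroup.reduce l with _ | ⟨b, t⟩
    · simp
    · rw [hr] at ih
      by_cases hc : a.1 = b.1 ∧ a.2 = !b.2
      · simpa [hc] using ih.tail
      · simpa [hc] using (List.isChain_cons_cons.2 ⟨hc, ih⟩)

lemma chain'_toWord (g : FreeGroup α) : List.IsChain NC g.toWord := by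
  have := chain'_reduce (α := α) g.toWord
  rwa [FreeGroup.reduce_toWord] at this

omit [DecidableEq α] in
lemma chain'_invRev_s12 {l : List (α × Bool)} (h : List.IsChain NC l) : List.IsChain NC (FreeGroup.invRev l) := by
  unfold FreeGroup.invRev
  rw [List.isChain_reverse]
  rw [List.isChain_map]
  refine h.imp ?_
  rintro ⟨a1, a2⟩ ⟨b1, b2⟩ hab
  simp only [flip, NC] at hab ⊢
  rintro ⟨h1, h2⟩
  exact hab ⟨h1.symm, by revert h2; cases a2 <;> cases b2 <;> simp⟩


variable {β : Type*} [DecidableEq β]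

/-- length of the longest common prefix -/
def cpl : List β → List β → ℕ
  | a :: l, b :: m => if a = b then cpl l m + 1 else 0
  | _, _ => 0

@[simp] lemma cpl_nil_left (m : List β) : cpl [] m = 0 := by cases m <;> rfl
@[simp] lemma cpl_nil_right (l : List β) : cpl l [] = 0 := by cases l <;> rfl
lemma cpl_cons (a b : β) (l m : List β) :
    cpl (a :: l) (b :: m) = if a = b then cpl l m + 1 else 0 := rfl

lemma cpl_le_left : ∀ (l m : List β), cpl l m ≤ l.length
  | [], m => by simp
  | a :: l, [] => by simp
  | a :: l, b :: m => by
    rw [cpl_cons]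
    split
    · simpa using cpl_le_left l m
    · simp

lemma cpl_comm : ∀ (l m : List β), cpl l m = cpl m l
  | [], m => by simp
  | a :: l, [] => by simp
  | a :: l, b :: m => by
    rw [cpl_cons, cpl_cons, cpl_comm l m]
    by_cases h : a = b
    · simp [h]
    · rw [if_neg h, if_neg (fun hh => h hh.symm)]

lemma cpl_le_right (l m : List β) : cpl l m ≤ m.length := by
  rw [cpl_comm]; exact cpl_le_left m l

lemma take_cpl_eq : ∀ (l m : List β), l.take (cpl l m) = m.take (cpl l m)
  | [], m => by simp
  | a :: l, [] => by simp
  | a :: l, b :: m => by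
    rw [cpl_cons]
    split
    · next h => simp [take_cpl_eq l m, h]
    · simp

lemma le_cpl_of_take_eq : ∀ (k : ℕ) (l m : List β), k ≤ l.length →
    l.take k = m.take k → k ≤ cpl l m
  | 0, _, _, _, _ => Nat.zero_le _
  | k + 1, [], m, hk, _ => by simp at hk
  | k + 1, a :: l, m, hk, he => by
    cases m with
    | nil => simp at he
    | cons b m =>
      simp only [take_succ_cons, cons.injEq] at he
      rw [cpl_cons, if_pos he.1]
      have := le_cpl_of_take_eq k l m (by simpa using hk) he.2
      omega

lemma head_drop_ne : ∀ (l m : List β) {a b : β},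
    (l.drop (cpl l m)).head? = some a → (m.drop (cpl l m)).head? = some b → a ≠ b
  | [], m, a, b => by simp
  | a' :: l, [], a, b => by simp
  | a' :: l, b' :: m, a, b => by
    rw [cpl_cons]
    by_cases h : a' = b'
    · rw [if_pos h]
      simpa using head_drop_ne l m
    · rw [if_neg h]
      simp only [drop_zero, head?_cons, Option.some.injEq]
      rintro rfl rfl
      exact h

lemma cpl_take_right : ∀ (l m : List β) (t : ℕ), cpl l (m.take t) = min (cpl l m) t
  | [], m, t => by simp
  | a :: l, [], t => by simp
  | a :: l, b :: m, 0 => by simp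
  | a :: l, b :: m, t + 1 => by
    simp only [take_succ_cons, cpl_cons, cpl_take_right l m t]
    split
    · omega
    · simp



lemma toWord_mk_of_chain {l : List (α × Bool)} (h : List.IsChain NC l) :
    (FreeGroup.mk l).toWord = l := by
  rw [FreeGroup.toWord_mk, reduce_eq_self_of_chain h]

/-- Key identity: |g| + |h| = |g⁻¹h| + 2·(common prefix length). -/
lemma norm_identity (g h : FreeGroup α) :
    g.norm + h.norm = (g⁻¹ * h).norm + 2 * cpl g.toWord h.toWord := by
  set lg := g.toWord with hlg
  set lh := h.toWord with hlh
  set k := cpl lg lh with hk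
  set x := lg.drop k with hx
  set y := lh.drop k with hy
  -- the product is mk (invRev x ++ y)
  have hgx : g = FreeGroup.mk (lg.take k) * FreeGroup.mk x := by
    rw [FreeGroup.mul_mk, List.take_append_drop, hlg, FreeGroup.mk_toWord]
  have hhy : h = FreeGroup.mk (lh.take k) * FreeGroup.mk y := by
    rw [FreeGroup.mul_mk, List.take_append_drop, hlh, FreeGroup.mk_toWord]
  have htk : lg.take k = lh.take k := take_cpl_eq lg lh
  have hprod : g⁻¹ * h = FreeGroup.mk (FreeGroup.invRev x ++ y) := by
    rw [hgx, hhy, htk, ← FreeGroup.mul_mk, ← FreeGroup.inv_mk]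
    group
  -- the word invRev x ++ y is reduced
  have hcx : List.IsChain NC x := (chain'_toWord g).suffix (List.drop_suffix _ _)
  have hcy : List.IsChain NC y := (chain'_toWord h).suffix (List.drop_suffix _ _)
  have hchain : List.IsChain NC (FreeGroup.invRev x ++ y) := by
    rw [List.isChain_append]
    refine ⟨chain'_invRev_s12 hcx, hcy, ?_⟩
    intro u hu v hv
    -- u is the last of invRev x, i.e. the formal inverse of the head of x
    have hxu : ∃ a, x.head? = some a ∧ u = (a.1, !a.2) := by
      unfold FreeGroup.invRev at hu
      rw [List.getLast?_reverse, List.head?_map] at hu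
      rcases hx' : x.head? with _ | a
      · rw [hx'] at hu; simp at hu
      · rw [hx'] at hu; simp only [Option.map_some] at hu
        exact ⟨a, rfl, by simpa using hu.symm⟩
    rcases hxu with ⟨a, hxa, rfl⟩
    have hne : a ≠ v := head_drop_ne lg lh hxa hv
    simp only [NC, not_and]
    intro h1 h2
    exact hne (Prod.ext h1 (by revert h2; cases a.2 <;> cases v.2 <;> simp))
  have htw : (g⁻¹ * h).toWord = FreeGroup.invRev x ++ y := by
    rw [hprod, toWord_mk_of_chain hchain]
  have hnorm : (g⁻¹ * h).norm = x.length + y.length := by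
    rw [FreeGroup.norm, htw, List.length_append, FreeGroup.invRev_length]
  have hk1 : k ≤ lg.length := cpl_le_left _ _
  have hk2 : k ≤ lh.length := cpl_le_right _ _
  have hxl : x.length = lg.length - k := by rw [hx, List.length_drop]
  have hyl : y.length = lh.length - k := by rw [hy, List.length_drop]
  have hng : g.norm = lg.length := rfl
  have hnh : h.norm = lh.length := rfl
  omega


variable [Fintype α]

/-- all lists of a given length -/
def allLists : ℕ → Finset (List (α × Bool))
  | 0 => {[]}
  | j + 1 => ((Finset.univ : Finset (α × Bool)) ×ˢ allLists j).image fun p => p.1 :: p.2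

lemma mem_allLists : ∀ {j : ℕ} {l : List (α × Bool)}, l.length = j → l ∈ allLists j
  | 0, l, h => by simp [allLists, List.length_eq_zero_iff.1 h]
  | j + 1, [], h => by simp at h
  | j + 1, a :: l, h => by
    simp only [allLists, Finset.mem_image]
    exact ⟨(a, l), by simp [Finset.mem_product, mem_allLists (by simpa using h)], rfl⟩

/-- reduced words of length j -/
def W (j : ℕ) : Finset (List (α × Bool)) :=
  (allLists j).filter fun l => List.IsChain NC l ∧ l.length = j

lemma mem_W {j : ℕ} {l : List (α × Bool)} (h1 : List.IsChain NC l) (h2 : l.length = j) :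
    l ∈ W (α := α) j := by
  simp [W, mem_allLists h2, h1, h2]

lemma card_W_one_le {n : ℕ} (hcard : Fintype.card α = n) : (W (α := α) 1).card ≤ 2 * n := by
  calc (W (α := α) 1).card ≤ (allLists (α := α) 1).card := Finset.card_filter_le _ _
    _ ≤ ((Finset.univ : Finset (α × Bool)) ×ˢ allLists 0).card := Finset.card_image_le
    _ ≤ 2 * n := by simp [allLists, Fintype.card_prod, hcard, mul_comm]

lemma card_W_succ_le {n : ℕ} (hcard : Fintype.card α = n) (j : ℕ) (hj : 1 ≤ j) :
    (W (α := α) (j + 1)).card ≤ (2 * n - 1) * (W (α := α) j).card := by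
  have hsub : W (α := α) (j + 1) ⊆ (W (α := α) j).biUnion fun l =>
      ((Finset.univ : Finset (α × Bool)).filter fun a => List.IsChain NC (a :: l)).image (· :: l) := by
    intro l hl
    simp only [W, Finset.mem_filter] at hl
    obtain ⟨-, hch, hlen⟩ := hl
    cases l with
    | nil => simp at hlen
    | cons a l =>
      refine Finset.mem_biUnion.2 ⟨l, mem_W hch.tail (by simpa using hlen), ?_⟩
      exact Finset.mem_image.2 ⟨a, by simp [hch], rfl⟩
  calc (W (α := α) (j + 1)).card ≤ _ := Finset.card_le_card hsub
    _ ≤ ∑ l ∈ W (α := α) j,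
        (((Finset.univ : Finset (α × Bool)).filter fun a => List.IsChain NC (a :: l)).image (· :: l)).card :=
      Finset.card_biUnion_le
    _ ≤ ∑ _l ∈ W (α := α) j, (2 * n - 1) := by
      refine Finset.sum_le_sum fun l hl => ?_
      refine le_trans Finset.card_image_le ?_
      simp only [W, Finset.mem_filter] at hl
      obtain ⟨-, hch, hlen⟩ := hl
      cases l with
      | nil => simp at hlen; omega
      | cons b t =>
        have hsub2 : ((Finset.univ : Finset (α × Bool)).filter fun a => List.IsChain NC (a :: b :: t))
            ⊆ (Finset.univ : Finset (α × Bool)).erase (b.1, !b.2) := by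
          intro a ha
          simp only [Finset.mem_filter, List.isChain_cons_cons] at ha
          refine Finset.mem_erase.2 ⟨?_, Finset.mem_univ _⟩
          intro hEq
          exact ha.2.1 ⟨by rw [hEq], by rw [hEq]⟩
        calc _ ≤ _ := Finset.card_le_card hsub2
          _ = 2 * n - 1 := by
            rw [Finset.card_erase_of_mem (Finset.mem_univ _)]
            simp [Fintype.card_prod, hcard, mul_comm]
    _ = (2 * n - 1) * (W (α := α) j).card := by
      rw [Finset.sum_const, smul_eq_mul, mul_comm]

lemma card_W_le {n : ℕ} (hcard : Fintype.card α = n) (j : ℕ) :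
    (W (α := α) (j + 1)).card ≤ 2 * n * (2 * n - 1) ^ j := by
  induction j with
  | zero => simpa using card_W_one_le hcard
  | succ j ih =>
    calc (W (α := α) (j + 1 + 1)).card ≤ (2 * n - 1) * (W (α := α) (j + 1)).card :=
      card_W_succ_le hcard (j + 1) (by omega)
    _ ≤ (2 * n - 1) * (2 * n * (2 * n - 1) ^ j) := Nat.mul_le_mul_left _ ih
    _ = 2 * n * (2 * n - 1) ^ (j + 1) := by ring

/-- nonempty reduced words of length ≤ k -/
def BallNT (k : ℕ) : Finset (List (α × Bool)) :=
  (Finset.range k).biUnion fun j => W (j + 1)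

lemma mem_BallNT {k : ℕ} {l : List (α × Bool)} (h1 : List.IsChain NC l) (h2 : 1 ≤ l.length)
    (h3 : l.length ≤ k) : l ∈ BallNT (α := α) k :=
  Finset.mem_biUnion.2 ⟨l.length - 1, Finset.mem_range.2 (by omega), mem_W h1 (by omega)⟩

lemma card_BallNT_le {n : ℕ} (hcard : Fintype.card α = n) (k : ℕ) :
    (BallNT (α := α) k).card ≤ ∑ j ∈ Finset.range k, 2 * n * (2 * n - 1) ^ j :=
  le_trans Finset.card_biUnion_le (Finset.sum_le_sum fun j _ => card_W_le hcard j)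

/-- reduced words of length ≤ k (including the empty word) -/
def Ball (k : ℕ) : Finset (List (α × Bool)) :=
  insert [] (BallNT k)

lemma mem_Ball {k : ℕ} {l : List (α × Bool)} (h1 : List.IsChain NC l) (h3 : l.length ≤ k) :
    l ∈ Ball (α := α) k := by
  rcases Nat.eq_zero_or_pos l.length with h | h
  · simp [Ball, List.length_eq_zero_iff.1 h]
  · exact Finset.mem_insert_of_mem (mem_BallNT h1 h h3)

lemma card_Ball_le {n : ℕ} (hcard : Fintype.card α = n) (k : ℕ) :
    (Ball (α := α) k).card ≤ 1 + ∑ j ∈ Finset.range k, 2 * n * (2 * n - 1) ^ j :=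
  le_trans (Finset.card_insert_le _ _) (by have := card_BallNT_le (α := α) hcard k; omega)


lemma geom_cast {n : ℕ} (hn : 2 ≤ n) (k : ℕ) :
    ((∑ j ∈ Finset.range k, 2 * n * (2 * n - 1) ^ j : ℕ) : ℝ) =
      (n / (n - 1)) * ((((2 * n - 1 : ℕ) : ℝ)) ^ k - 1) := by
  have h1 : ((2 * n - 1 : ℕ) : ℝ) = 2 * (n : ℝ) - 1 := by
    have : (1 : ℕ) ≤ 2 * n := by omega
    push_cast [this]; ring
  have h2n : (2:ℝ) ≤ (n:ℝ) := by exact_mod_cast hn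
  have hq : ((2 * n - 1 : ℕ) : ℝ) ≠ 1 := by rw [h1]; nlinarith
  push_cast
  rw [← Finset.mul_sum, geom_sum_eq hq]
  have hn1 : ((n : ℝ) - 1) ≠ 0 := by nlinarith
  have hd : (2 * (n:ℝ) - 1) - 1 ≠ 0 := by nlinarith
  rw [h1]
  field_simp
  ring

lemma card_Ball_le_real {n : ℕ} (hcard : Fintype.card α = n) (hn : 2 ≤ n) (k : ℕ) :
    ((Ball (α := α) k).card : ℝ) ≤ (n / (n - 1)) * (((2 * n - 1 : ℕ) : ℝ)) ^ k := by
  have h := card_Ball_le (α := α) hcard k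
  have h2 : ((Ball (α := α) k).card : ℝ) ≤
      1 + ((∑ j ∈ Finset.range k, 2 * n * (2 * n - 1) ^ j : ℕ) : ℝ) := by exact_mod_cast h
  rw [geom_cast hn k] at h2
  have hn1 : (1 : ℝ) ≤ (n : ℝ) / ((n : ℝ) - 1) := by
    have h2n : (2:ℝ) ≤ (n:ℝ) := by exact_mod_cast hn
    rw [le_div_iff₀ (by nlinarith)]; nlinarith
  nlinarith [h2, hn1]

lemma card_BallNT_le_real {n : ℕ} (hcard : Fintype.card α = n) (hn : 2 ≤ n) (k : ℕ) :
    ((BallNT (α := α) k).card : ℝ) ≤ (n / (n - 1)) * (((2 * n - 1 : ℕ) : ℝ)) ^ k := by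
  have h := card_BallNT_le (α := α) hcard k
  have h2 : ((BallNT (α := α) k).card : ℝ) ≤
      ((∑ j ∈ Finset.range k, 2 * n * (2 * n - 1) ^ j : ℕ) : ℝ) := by exact_mod_cast h
  rw [geom_cast hn k] at h2
  have hq : (0:ℝ) ≤ ((2 * n - 1 : ℕ) : ℝ) ^ k := by positivity
  have h2n : (2:ℝ) ≤ (n:ℝ) := by exact_mod_cast hn
  have hn1 : (0 : ℝ) ≤ (n : ℝ) / ((n : ℝ) - 1) := div_nonneg (by linarith) (by linarith)
  nlinarith [h2]

/-- the main counting bound, after centering -/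
lemma main_count {n : ℕ} (hcard : Fintype.card α = n) (hn : 2 ≤ n) (R e : ℕ) (he : 1 ≤ e)
    (S : Finset (FreeGroup α)) (hnorm : ∀ g ∈ S, g.norm ≤ R)
    (hDDC : ∀ g ∈ S, ∀ h ∈ S, ∀ g' ∈ S, ∀ h' ∈ S,
      g ≠ h → g' ≠ h' → g⁻¹ * h = g'⁻¹ * h' → g = g' ∧ h = h') :
    (S.card : ℝ) ≤ (n / (n - 1)) * (((2 * n - 1 : ℕ) : ℝ)) ^ (e - 1)
      + 2 * n * (((2 * n - 1 : ℕ) : ℝ)) ^ (e - 1)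
      + (n / (n - 1)) * (((2 * n - 1 : ℕ) : ℝ)) ^ (2 * R - 2 * e) := by
  classical
  set f : FreeGroup α → List (α × Bool) := fun g => g.toWord.take e with hf
  set Ss := S.filter (fun g => g.norm < e) with hSs
  set Sb := S.filter (fun g => ¬ g.norm < e) with hSb
  have hsplit : Ss.card + Sb.card = S.card := Finset.card_filter_add_card_filter_not _
  -- small part
  have hSsle : Ss.card ≤ (Ball (α := α) (e - 1)).card := by
    refine Finset.card_le_card_of_injOn FreeGroup.toWord ?_ ?_
    · intro g hg
      simp only [Finset.mem_coe, hSs, Finset.mem_filter] at hg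
      exact mem_Ball (chain'_toWord g) (by have : g.norm = g.toWord.length := rfl; omega)
    · exact fun a _ b _ h => FreeGroup.toWord_injective h
  -- big part: image of prefixes
  set M := Sb.image f with hM
  have hMW : M ⊆ W (α := α) e := by
    intro l hl
    rcases Finset.mem_image.1 hl with ⟨g, hg, rfl⟩
    simp only [hSb, Finset.mem_filter] at hg
    refine mem_W ((chain'_toWord g).prefix (List.take_prefix _ _)) ?_
    have : g.norm = g.toWord.length := rfl
    rw [List.length_take]; omega
  have hMcard : M.card ≤ 2 * n * (2 * n - 1) ^ (e - 1) := by
    calc M.card ≤ (W (α := α) e).card := Finset.card_le_card hMW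
      _ ≤ 2 * n * (2 * n - 1) ^ (e - 1) := by
        have := card_W_le (α := α) hcard (e - 1)
        have he' : e - 1 + 1 = e := by omega
        rwa [he'] at this
  -- pairs with equal prefix
  set P := Sb.offDiag.filter (fun p => f p.1 = f p.2) with hP
  have hfib : ∀ g ∈ Sb, f g ∈ M := fun g hg => Finset.mem_image_of_mem f hg
  have h1 : Sb.card = ∑ m ∈ M, (Sb.filter (fun g => f g = m)).card :=
    Finset.card_eq_sum_card_fiberwise hfib
  have h2 : P.card = ∑ m ∈ M, ((Sb.filter (fun g => f g = m)).offDiag).card := by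
    have hPf : ∀ p ∈ P, f p.1 ∈ M := by
      intro p hp
      simp only [hP, Finset.mem_filter] at hp
      exact hfib _ (Finset.mem_offDiag.1 hp.1).1
    rw [Finset.card_eq_sum_card_fiberwise hPf]
    refine Finset.sum_congr rfl fun m hm => ?_
    congr 1
    ext ⟨g, h⟩
    simp only [hP, Finset.mem_filter, Finset.mem_offDiag]
    constructor
    · rintro ⟨⟨⟨hg, hh, hne⟩, hfe⟩, hfm⟩
      exact ⟨⟨hg, hfm⟩, ⟨hh, by rw [← hfe]; exact hfm⟩, hne⟩
    · rintro ⟨⟨hg, hfg⟩, ⟨hh, hfh⟩, hne⟩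
      exact ⟨⟨⟨hg, hh, hne⟩, by rw [hfg, hfh]⟩, hfg⟩
  have hSbcard : Sb.card ≤ M.card + P.card := by
    rw [h1, h2]
    calc ∑ m ∈ M, (Sb.filter (fun g => f g = m)).card
        ≤ ∑ m ∈ M, (1 + ((Sb.filter (fun g => f g = m)).offDiag).card) := by
          refine Finset.sum_le_sum fun m _ => ?_
          rw [Finset.offDiag_card]
          set x := (Sb.filter (fun g => f g = m)).card
          rcases le_or_gt x 1 with h | h
          · interval_cases x <;> simp
          · have hxx : 2 * x ≤ x * x := Nat.mul_le_mul_right x h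
            omega
      _ = _ := by rw [Finset.sum_add_distrib, Finset.sum_const, smul_eq_mul, mul_one]
  -- pairs inject into nontrivial ball of radius 2R - 2e
  have hPle : P.card ≤ (BallNT (α := α) (2 * R - 2 * e)).card := by
    refine Finset.card_le_card_of_injOn (fun p => (p.1⁻¹ * p.2).toWord) ?_ ?_
    · rintro ⟨g, h⟩ hp
      dsimp only
      simp only [Finset.mem_coe, hP, Finset.mem_filter, Finset.mem_offDiag] at hp
      obtain ⟨⟨hg, hh, hne⟩, hfe⟩ := hp
      simp only [hSb, Finset.mem_filter] at hg hh
      have hlen : (g⁻¹ * h).toWord.length = (g⁻¹ * h).norm := rfl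
      have hnz : (g⁻¹ * h).norm ≠ 0 := fun h0 =>
        hne (inv_mul_eq_one.mp (FreeGroup.norm_eq_zero.1 h0))
      have hid := norm_identity g h
      have hcpl : e ≤ cpl g.toWord h.toWord := by
        refine le_cpl_of_take_eq e _ _ ?_ hfe
        have : g.norm = g.toWord.length := rfl
        omega
      have hgR := hnorm g hg.1
      have hhR := hnorm h hh.1
      exact mem_BallNT (chain'_toWord _) (by omega) (by omega)
    · intro p hp p' hp' hEq
      obtain ⟨g, h⟩ := p
      obtain ⟨g', h'⟩ := p'
      simp only [Finset.mem_coe, hP, Finset.mem_filter, Finset.mem_offDiag] at hp hp'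
      obtain ⟨⟨hg, hh, hne⟩, -⟩ := hp
      obtain ⟨⟨hg', hh', hne'⟩, -⟩ := hp'
      simp only [hSb, Finset.mem_filter] at hg hh hg' hh'
      have hEq' := FreeGroup.toWord_injective hEq
      obtain ⟨e1, e2⟩ := hDDC g hg.1 h hh.1 g' hg'.1 h' hh'.1 hne hne' hEq'
      simp [Prod.ext_iff, e1, e2]
  -- combine
  have hq : (0:ℝ) ≤ ((2 * n - 1 : ℕ) : ℝ) ^ (e-1) := by positivity
  have hBr := card_BallNT_le_real (α := α) hcard hn (2 * R - 2 * e)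
  have hBs := card_Ball_le_real (α := α) hcard hn (e - 1)
  have c1 : (Ss.card : ℝ) ≤ (n / (n - 1)) * (((2 * n - 1 : ℕ) : ℝ)) ^ (e - 1) :=
    le_trans (by exact_mod_cast hSsle) hBs
  have c2 : (Sb.card : ℝ) ≤ 2 * n * (((2 * n - 1 : ℕ) : ℝ)) ^ (e - 1)
      + (n / (n - 1)) * (((2 * n - 1 : ℕ) : ℝ)) ^ (2 * R - 2 * e) := by
    have : (Sb.card : ℝ) ≤ (M.card : ℝ) + (P.card : ℝ) := by exact_mod_cast hSbcard
    refine le_trans this (add_le_add ?_ (le_trans (by exact_mod_cast hPle) hBr))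
    calc (M.card : ℝ) ≤ ((2 * n * (2 * n - 1) ^ (e - 1) : ℕ) : ℝ) := by exact_mod_cast hMcard
      _ = 2 * n * (((2 * n - 1 : ℕ) : ℝ)) ^ (e - 1) := by push_cast; ring
  have : (S.card : ℝ) = (Ss.card : ℝ) + (Sb.card : ℝ) := by exact_mod_cast hsplit.symm
  rw [this]; linarith


/-- Chebyshev center of a finite set of diameter ≤ d in the tree -/
lemma center {d : ℕ} (S : Finset (FreeGroup α)) (hne : S.Nonempty)
    (hdiam : ∀ g ∈ S, ∀ h ∈ S, (g⁻¹ * h).norm ≤ d) :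
    ∃ v : FreeGroup α, ∀ g ∈ S, (v⁻¹ * g).norm ≤ (d + 1) / 2 := by
  obtain ⟨p, hp, hmax⟩ :=
    Finset.exists_max_image (S ×ˢ S) (fun p => (p.1⁻¹ * p.2).norm) (hne.product hne)
  obtain ⟨g₀, h₀⟩ := p
  rw [Finset.mem_product] at hp
  set δ := (g₀⁻¹ * h₀).norm with hδ
  set w := (g₀⁻¹ * h₀).toWord with hw
  set t := δ / 2 with ht
  refine ⟨g₀ * FreeGroup.mk (w.take t), ?_⟩
  intro g hg
  have hvg : (g₀ * FreeGroup.mk (w.take t))⁻¹ * g =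
      (FreeGroup.mk (w.take t))⁻¹ * (g₀⁻¹ * g) := by group
  rw [hvg]
  set u := g₀⁻¹ * g with hu
  have hchain : List.IsChain NC (w.take t) := (chain'_toWord _).prefix (List.take_prefix _ _)
  have htww : (FreeGroup.mk (w.take t)).toWord = w.take t := toWord_mk_of_chain hchain
  have hwlen : w.length = δ := rfl
  have hnv : (FreeGroup.mk (w.take t)).norm = t := by
    show (FreeGroup.mk (w.take t)).toWord.length = t
    rw [htww, List.length_take]; omega
  have hid1 := norm_identity (FreeGroup.mk (w.take t)) u
  have hcpl1 : cpl (FreeGroup.mk (w.take t)).toWord u.toWord = min (cpl u.toWord w) t := by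
    rw [htww, cpl_comm, cpl_take_right]
  have hid2 := norm_identity u (g₀⁻¹ * h₀)
  have hcpl2 : cpl u.toWord (g₀⁻¹ * h₀).toWord = cpl u.toWord w := rfl
  have h1 : u.norm ≤ δ := hmax (g₀, g) (Finset.mem_product.2 ⟨hp.1, hg⟩)
  have h2 : (u⁻¹ * (g₀⁻¹ * h₀)).norm ≤ δ := by
    have : u⁻¹ * (g₀⁻¹ * h₀) = g⁻¹ * h₀ := by rw [hu]; group
    rw [this]
    exact hmax (g, h₀) (Finset.mem_product.2 ⟨hg, hp.2⟩)
  have h3 : δ ≤ d := hdiam g₀ hp.1 h₀ hp.2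
  rw [hnv, hcpl1] at hid1
  rw [hcpl2] at hid2
  omega

lemma finite_of_diam (D : Set (FreeGroup α)) (g₀ : FreeGroup α) (d : ℕ)
    (hdiam : ∀ g ∈ D, (g₀⁻¹ * g).norm ≤ d) : D.Finite := by
  refine Set.Finite.subset (Set.Finite.image (fun l => g₀ * FreeGroup.mk l)
    (Ball (α := α) d).finite_toSet) ?_
  intro g hg
  refine ⟨(g₀⁻¹ * g).toWord, ?_, ?_⟩
  · exact mem_Ball (chain'_toWord _) (hdiam g hg)
  · show g₀ * FreeGroup.mk (g₀⁻¹ * g).toWord = g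
    rw [FreeGroup.mk_toWord]; group


end DDCAux

open DDCAux Real in
set_option maxHeartbeats 1000000 in
theorem stmt12 (α : Type*) [Fintype α] [DecidableEq α] (n : ℕ) (hn : 2 ≤ n)
    (hcard : Fintype.card α = n) :
    ∃ c : ℝ, c = (2 * n * (4 * n ^ 2 - 3 * n + 1) : ℝ) /
        (((2 * n - 1 : ℝ) ^ ((1 : ℝ) / 3)) * ((2 * n - 1 : ℝ) ^ ((2 : ℝ) / 3) - 1)) ∧
      ∀ (d : ℕ) (D : Set (FreeGroup α)), IsDDC D →
        (∀ g ∈ D, ∀ h ∈ D, (g⁻¹ * h).norm ≤ d) →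
        (D.ncard : ℝ) ≤ c * (2 * n - 1 : ℝ) ^ ((d : ℝ) / 3) := by
  classical
  refine ⟨_, rfl, ?_⟩
  intro d D hDDC hdiam
  have hn2 : (2 : ℝ) ≤ (n : ℝ) := by exact_mod_cast hn
  set q : ℝ := 2 * (n : ℝ) - 1 with hqdef
  have hq3 : (3 : ℝ) ≤ q := by rw [hqdef]; linarith
  have hq0 : (0 : ℝ) < q := by linarith
  have hq1 : (1 : ℝ) < q := by linarith
  set q13 : ℝ := q ^ ((1 : ℝ) / 3) with hq13def
  set s : ℝ := q ^ ((2 : ℝ) / 3) with hsdef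
  set N : ℝ := 2 * n * (4 * n ^ 2 - 3 * n + 1) with hNdef
  set c : ℝ := N / (q13 * (s - 1)) with hcdef
  have hq13pos : 0 < q13 := Real.rpow_pos_of_pos hq0 _
  have hs0 : 0 ≤ s := (Real.rpow_pos_of_pos hq0 _).le
  have hs1 : 1 < s := by
    rw [hsdef]
    exact Real.one_lt_rpow_iff_of_pos hq0 |>.2 (Or.inl ⟨hq1, by norm_num⟩)
  have hs3 : s ^ (3 : ℕ) = q ^ (2 : ℕ) := by
    rw [hsdef, ← Real.rpow_natCast (q ^ ((2:ℝ)/3)) 3, ← Real.rpow_mul hq0.le,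
      ← Real.rpow_natCast q 2]
    norm_num
  have hs2 : 2 ≤ s := by
    by_contra hcon
    push_neg at hcon
    have hA : s ^ 2 ≤ 2 * s := by nlinarith
    have hB : s ^ 3 ≤ 2 * s ^ 2 := by nlinarith
    have h8 : s ^ 3 < 8 := by nlinarith
    have h9 : (9:ℝ) ≤ q ^ 2 := by nlinarith
    rw [hs3] at h8
    linarith
  have hdenpos : 0 < q13 * (s - 1) := by
    have : (0:ℝ) < s - 1 := by linarith
    positivity
  have hNq : q ^ (2:ℕ) ≤ N := by rw [hNdef, hqdef]; ring_nf; nlinarith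
  have hc1 : (1 : ℝ) ≤ c := by
    rw [hcdef, le_div_iff₀ hdenpos, one_mul]
    have hq13q : q13 ≤ q := by
      rw [hq13def]
      calc q ^ ((1:ℝ)/3) ≤ q ^ (1:ℝ) := Real.rpow_le_rpow_of_exponent_le hq1.le (by norm_num)
        _ = q := Real.rpow_one q
    have hsq : s ≤ q := by
      rw [hsdef]
      calc q ^ ((2:ℝ)/3) ≤ q ^ (1:ℝ) := Real.rpow_le_rpow_of_exponent_le hq1.le (by norm_num)
        _ = q := Real.rpow_one q
    nlinarith
  have hrpow_pos : (0:ℝ) < q ^ ((d:ℝ)/3) := Real.rpow_pos_of_pos hq0 _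
  -- trivial cases
  rcases Set.eq_empty_or_nonempty D with rfl | ⟨g₀, hg₀⟩
  · simp only [Set.ncard_empty, Nat.cast_zero]
    positivity
  rcases Nat.eq_zero_or_pos d with rfl | hd1
  · -- diameter 0 : D is a singleton
    have hsub : D = {g₀} := by
      apply Set.eq_singleton_iff_unique_mem.2 ⟨hg₀, ?_⟩
      intro g hg
      have := hdiam g₀ hg₀ g hg
      have h0 : (g₀⁻¹ * g).norm = 0 := by omega
      exact (inv_mul_eq_one.mp (FreeGroup.norm_eq_zero.1 h0)).symm
    rw [hsub, Set.ncard_singleton]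
    have hzero : (((0:ℕ):ℝ))/3 = (0:ℝ) := by norm_num
    rw [Nat.cast_one, hzero, Real.rpow_zero, mul_one]
    exact hc1
  -- main case
  have hDfin : D.Finite := finite_of_diam D g₀ d (fun g hg => hdiam g₀ hg₀ g hg)
  set DF := hDfin.toFinset with hDF
  have hncard : D.ncard = DF.card := Set.ncard_eq_toFinset_card D hDfin
  have hmemDF : ∀ g, g ∈ DF ↔ g ∈ D := fun g => Set.Finite.mem_toFinset hDfin
  obtain ⟨v, hv⟩ := center DF ⟨g₀, (hmemDF g₀).2 hg₀⟩
    (fun g hg h hh => hdiam g ((hmemDF g).1 hg) h ((hmemDF h).1 hh))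
  set R := (d + 1) / 2 with hR
  set e := (2 * R + 2) / 3 with he
  have he1 : 1 ≤ e := by omega
  set S := DF.image (fun g => v⁻¹ * g) with hS
  have hcardS : S.card = DF.card :=
    Finset.card_image_of_injective _ (mul_right_injective v⁻¹)
  have hnormS : ∀ x ∈ S, x.norm ≤ R := by
    intro x hx
    obtain ⟨g, hg, rfl⟩ := Finset.mem_image.1 hx
    exact hv g hg
  have hDDCS : ∀ x ∈ S, ∀ y ∈ S, ∀ x' ∈ S, ∀ y' ∈ S,
      x ≠ y → x' ≠ y' → x⁻¹ * y = x'⁻¹ * y' → x = x' ∧ y = y' := by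
    intro x hx y hy x' hx' y' hy' hxy hxy' hEq
    obtain ⟨g, hg, rfl⟩ := Finset.mem_image.1 hx
    obtain ⟨h, hh, rfl⟩ := Finset.mem_image.1 hy
    obtain ⟨g', hg', rfl⟩ := Finset.mem_image.1 hx'
    obtain ⟨h', hh', rfl⟩ := Finset.mem_image.1 hy'
    have e1 : (v⁻¹*g)⁻¹ * (v⁻¹*h) = g⁻¹ * h := by group
    have e2 : (v⁻¹*g')⁻¹ * (v⁻¹*h') = g'⁻¹ * h' := by group
    rw [e1, e2] at hEq
    have hgh : g ≠ h := fun hc => hxy (by rw [hc])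
    have hgh' : g' ≠ h' := fun hc => hxy' (by rw [hc])
    obtain ⟨f1, f2⟩ := hDDC g ((hmemDF g).1 hg) h ((hmemDF h).1 hh) g' ((hmemDF g').1 hg')
      h' ((hmemDF h').1 hh') hgh hgh' hEq
    exact ⟨by rw [f1], by rw [f2]⟩
  have hmain := main_count hcard hn R e he1 S hnormS hDDCS
  -- cast (2n-1 : ℕ) to q
  have hone : (1:ℕ) ≤ 2 * n := by omega
  have hqn : ((2 * n - 1 : ℕ) : ℝ) = q := by rw [hqdef]; push_cast [hone]; ring
  rw [hqn] at hmain
  -- exponent bounds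
  have hexp1 : 3 * (e - 1) ≤ d := by omega
  have hexp2 : 3 * (2 * R - 2 * e) ≤ d + 1 := by omega
  have hpow1 : q ^ (e - 1) ≤ q ^ (((d:ℝ) + 1) / 3) := by
    rw [← Real.rpow_natCast q (e-1)]
    apply Real.rpow_le_rpow_of_exponent_le hq1.le
    have : ((3 * (e-1) : ℕ) : ℝ) ≤ (d : ℝ) := by exact_mod_cast hexp1
    push_cast at this
    linarith
  have hpow2 : q ^ (2 * R - 2 * e) ≤ q ^ (((d:ℝ) + 1) / 3) := by
    rw [← Real.rpow_natCast q (2 * R - 2 * e)]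
    apply Real.rpow_le_rpow_of_exponent_le hq1.le
    have : ((3 * (2 * R - 2 * e) : ℕ) : ℝ) ≤ (d : ℝ) + 1 := by exact_mod_cast hexp2
    push_cast at this
    linarith
  have hA0 : (0:ℝ) < (n:ℝ) - 1 := by linarith
  have hcoef1 : (0:ℝ) ≤ (n:ℝ) / ((n:ℝ) - 1) := by positivity
  have hbig : ((DF.card : ℕ) : ℝ) ≤
      ((n:ℝ) / ((n:ℝ) - 1) + 2 * n + (n:ℝ) / ((n:ℝ) - 1)) * q ^ (((d:ℝ) + 1) / 3) := by
    rw [← hcardS]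
    refine le_trans hmain ?_
    have t1 : (n:ℝ) / ((n:ℝ)-1) * q ^ (e-1) ≤ (n:ℝ)/((n:ℝ)-1) * q ^ (((d:ℝ)+1)/3) :=
      mul_le_mul_of_nonneg_left hpow1 hcoef1
    have t2 : 2 * (n:ℝ) * q ^ (e-1) ≤ 2 * (n:ℝ) * q ^ (((d:ℝ)+1)/3) :=
      mul_le_mul_of_nonneg_left hpow1 (by positivity)
    have t3 : (n:ℝ) / ((n:ℝ)-1) * q ^ (2*R-2*e) ≤ (n:ℝ)/((n:ℝ)-1) * q ^ (((d:ℝ)+1)/3) :=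
      mul_le_mul_of_nonneg_left hpow2 hcoef1
    linarith
  -- final constant comparison
  have hsplitpow : q ^ (((d:ℝ) + 1) / 3) = q ^ ((d:ℝ)/3) * q13 := by
    rw [hq13def, ← Real.rpow_add hq0]
    congr 1
    ring
  have hkey : ((n:ℝ) / ((n:ℝ) - 1) + 2 * n + (n:ℝ) / ((n:ℝ) - 1)) * q13 ≤ c := by
    rw [hcdef, le_div_iff₀ hdenpos]
    have hq13sq : q13 * q13 = s := by
      rw [hq13def, hsdef, ← Real.rpow_add hq0]
      norm_num
    have hAeq : ((n:ℝ) / ((n:ℝ) - 1) + 2 * n + (n:ℝ) / ((n:ℝ) - 1)) =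
        2 * (n:ℝ)^2 / ((n:ℝ) - 1) := by field_simp; ring
    rw [hAeq]
    rw [div_mul_eq_mul_div, div_mul_eq_mul_div, div_le_iff₀ hA0]
    have hstep : 2 * (n:ℝ)^2 * q13 * (q13 * (s-1)) = 2 * (n:ℝ)^2 * (s * (s - 1)) := by
      calc 2 * (n:ℝ)^2 * q13 * (q13 * (s-1)) = 2 * (n:ℝ)^2 * (q13 * q13) * (s-1) := by ring
        _ = 2 * (n:ℝ)^2 * (s * (s - 1)) := by rw [hq13sq]; ring
    rw [hstep, hNdef]
    -- 2 n² s (s-1) ≤ 2n(4n²-3n+1)(n-1)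
    have f2 : 2 * s^2 ≤ q^2 := by nlinarith [hs3, hs2, sq_nonneg s]
    have hqsq : q^2 = 4*(n:ℝ)^2 - 4*n + 1 := by rw [hqdef]; ring
    have g1 : 2*(n:ℝ)^2 * (s*(s-1)) ≤ (n:ℝ)^2 * q^2 := by
      nlinarith [f2, hs0, sq_nonneg (n:ℝ), hn2]
    have g2 : (n:ℝ)^2 * q^2 ≤ 2*(n:ℝ)*(4*(n:ℝ)^2-3*(n:ℝ)+1)*((n:ℝ)-1) := by
      rw [hqsq]
      nlinarith [mul_nonneg (mul_nonneg (by linarith : (0:ℝ) ≤ (n:ℝ)-2)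
        (by nlinarith : (0:ℝ) ≤ 4*(n:ℝ)^2-2*(n:ℝ)+3)) (by linarith : (0:ℝ) ≤ (n:ℝ))]
    linarith
  calc (D.ncard : ℝ) = ((DF.card : ℕ) : ℝ) := by rw [hncard]
    _ ≤ ((n:ℝ) / ((n:ℝ) - 1) + 2 * n + (n:ℝ) / ((n:ℝ) - 1)) * q ^ (((d:ℝ) + 1) / 3) := hbig
    _ = (((n:ℝ) / ((n:ℝ) - 1) + 2 * n + (n:ℝ) / ((n:ℝ) - 1)) * q13) * q ^ ((d:ℝ)/3) := by
        rw [hsplitpow]; ring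
    _ ≤ c * q ^ ((d:ℝ)/3) := mul_le_mul_of_nonneg_right hkey hrpow_pos.le
end

section
/- Let F be a free group of rank n ≥ 2 and let d be an even positive integer. Then there exists a distinct difference configuration in F of diameter at most d with cardinality at least 2n(2n−1)^{d/3 − (4/3)·log_{2n−1}(d/3) − 5}. -/
set_option linter.unusedSectionVars false

namespace DDCaux
open FreeGroup List

/-! ### Reduced words -/

def Rd {α : Type*} (L : List (α × Bool)) : Prop := List.Chain' (fun x y => y ≠ (x.1, !x.2)) L

section Reduced
variable {α : Type*} [DecidableEq α]

lemma Rd.tail' {x : α × Bool} {L : List (α × Bool)} (h : Rd (x :: L)) : Rd L :=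
  (List.isChain_cons.mp h).2

lemma reduce_eq_self {L : List (α × Bool)} (h : Rd L) : FreeGroup.reduce L = L := by
  induction L with
  | nil => rfl
  | cons x L ih =>
    have hL := ih h.tail'
    rw [FreeGroup.reduce.cons, hL]
    cases L with
    | nil => rfl
    | cons y M =>
      have hxy : y ≠ (x.1, !x.2) := (List.isChain_cons_cons.mp h).1
      have : ¬ (x.1 = y.1 ∧ x.2 = !y.2) := by
        rintro ⟨h1, h2⟩
        exact hxy (Prod.ext h1.symm (by simp [h2]))
      simp [this]

lemma toWord_mk_of_rd {L : List (α × Bool)} (h : Rd L) : (FreeGroup.mk L).toWord = L := by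
  rw [FreeGroup.toWord_mk, reduce_eq_self h]

lemma mk_inj_of_rd {L M : List (α × Bool)} (hL : Rd L) (hM : Rd M)
    (h : FreeGroup.mk L = FreeGroup.mk M) : L = M := by
  rw [← toWord_mk_of_rd hL, ← toWord_mk_of_rd hM, h]

lemma norm_mk_of_rd {L : List (α × Bool)} (h : Rd L) : (FreeGroup.mk L).norm = L.length := by
  rw [FreeGroup.norm, toWord_mk_of_rd h]

end Reduced

section RdLemmas
variable {α : Type*}

/-- common prefix decomposition -/
lemma exists_common_prefix {L M : List (α × Bool)} (hlen : L.length = M.length) (hne : L ≠ M) :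
    ∃ (p A B : List (α × Bool)) (a b : α × Bool),
      L = p ++ a :: A ∧ M = p ++ b :: B ∧ a ≠ b ∧ A.length = B.length := by
  induction L generalizing M with
  | nil => cases M with
    | nil => exact absurd rfl hne
    | cons y M => simp at hlen
  | cons x L ih =>
    cases M with
    | nil => simp at hlen
    | cons y M =>
      by_cases hxy : x = y
      · subst hxy
        have hLM : L ≠ M := by rintro rfl; exact hne rfl
        obtain ⟨p, A, B, a, b, h1, h2, h3, h4⟩ := ih (by simpa using hlen) hLM
        exact ⟨x :: p, A, B, a, b, by simp [h1], by simp [h2], h3, h4⟩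
      · exact ⟨[], L, M, x, y, rfl, rfl, hxy, by simpa using hlen⟩

lemma rd_invRev {L : List (α × Bool)} (h : Rd L) : Rd (FreeGroup.invRev L) := by
  unfold FreeGroup.invRev
  rw [Rd, List.Chain', List.isChain_reverse, List.isChain_map]
  refine h.imp ?_
  rintro ⟨xa, xb⟩ ⟨ya, yb⟩ hxy h'
  apply hxy
  simp only [flip, Prod.mk.injEq] at h'
  obtain ⟨h1, h2⟩ := h'
  subst h1
  simp [Prod.ext_iff]
  cases xb <;> cases yb <;> simp_all

lemma invRev_cons (x : α × Bool) (L : List (α × Bool)) :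
    FreeGroup.invRev (x :: L) = FreeGroup.invRev L ++ [(x.1, !x.2)] := by
  simp [FreeGroup.invRev]

lemma getLast?_invRev_cons (x : α × Bool) (L : List (α × Bool)) :
    (FreeGroup.invRev (x :: L)).getLast? = some (x.1, !x.2) := by
  rw [invRev_cons]; simp

/-- the difference word is reduced -/
lemma rd_diff {A B : List (α × Bool)} {a b : α × Bool} (hA : Rd (a :: A)) (hB : Rd (b :: B))
    (hab : a ≠ b) : Rd (FreeGroup.invRev (a :: A) ++ (b :: B)) := by
  refine List.isChain_append.mpr ⟨rd_invRev hA, hB, ?_⟩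
  intro z hz y hy
  rw [getLast?_invRev_cons] at hz
  simp only [Option.mem_def, Option.some.injEq] at hz
  subst hz
  simp only [List.head?_cons, Option.mem_def, Option.some.injEq] at hy
  subst hy
  simpa only [Bool.not_not, Prod.mk.eta] using hab.symm

end RdLemmas

/-! ### Extension machinery -/

section Ext
variable {α : Type*} {q : ℕ} (e : (α × Bool) → Fin q → (α × Bool))

/-- extend a word letter-by-letter using codes -/
def ext : (α × Bool) → List (Fin q) → List (α × Bool)
  | _, [] => []
  | z, i :: t => e z i :: ext (e z i) t

/-- last letter of the extension -/
def lastc : (α × Bool) → List (Fin q) → (α × Bool)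
  | z, [] => z
  | z, i :: t => lastc (e z i) t

@[simp] lemma ext_nil (z : α × Bool) : ext e z [] = [] := rfl
@[simp] lemma ext_cons (z : α × Bool) (i : Fin q) (t : List (Fin q)) :
    ext e z (i :: t) = e z i :: ext e (e z i) t := rfl
@[simp] lemma lastc_nil (z : α × Bool) : lastc e z [] = z := rfl
@[simp] lemma lastc_cons (z : α × Bool) (i : Fin q) (t : List (Fin q)) :
    lastc e z (i :: t) = lastc e (e z i) t := rfl

@[simp] lemma ext_length (z : α × Bool) (t : List (Fin q)) : (ext e z t).length = t.length := by
  induction t generalizing z with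
  | nil => rfl
  | cons i t ih => simp [ih]

lemma ext_take (z : α × Bool) (t : List (Fin q)) (r : ℕ) :
    (ext e z t).take r = ext e z (t.take r) := by
  induction t generalizing z r with
  | nil => simp
  | cons i t ih =>
    cases r with
    | zero => simp
    | succ r => simp [ih]

lemma ext_append (z : α × Bool) (t₁ t₂ : List (Fin q)) :
    ext e z (t₁ ++ t₂) = ext e z t₁ ++ ext e (lastc e z t₁) t₂ := by
  induction t₁ generalizing z with
  | nil => simp
  | cons i t ih => simp [ih]

lemma getLast?_cons_ext (z : α × Bool) (t : List (Fin q)) :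
    (z :: ext e z t).getLast? = some (lastc e z t) := by
  induction t generalizing z with
  | nil => rfl
  | cons i t ih =>
    rw [ext_cons, List.getLast?_cons_cons, ih, lastc_cons]

lemma rd_cons_ext (he : ∀ z i, e z i ≠ (z.1, !z.2)) (z : α × Bool) (t : List (Fin q)) :
    Rd (z :: ext e z t) := by
  induction t generalizing z with
  | nil => simp [Rd, List.Chain']
  | cons i t ih =>
    rw [ext_cons, Rd, List.Chain', List.isChain_cons_cons]
    exact ⟨he z i, ih (e z i)⟩

lemma ext_inj (hinj : ∀ z, Function.Injective (e z)) (z : α × Bool) {t t' : List (Fin q)}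
    (h : ext e z t = ext e z t') : t = t' := by
  induction t generalizing z t' with
  | nil => cases t' with
    | nil => rfl
    | cons i t' => simp at h
  | cons i t ih =>
    cases t' with
    | nil => simp at h
    | cons i' t' =>
      simp only [ext_cons, List.cons.injEq] at h
      have : i = i' := hinj z h.1
      subst this
      exact congrArg _ (ih _ h.2)

end Ext

/-! ### Words and collisions -/

section Words
variable {α : Type*} [DecidableEq α] {q : ℕ} (e : (α × Bool) → Fin q → (α × Bool)) (ℓ k : ℕ)

/-- the prefix word of a parameter -/
def wordOf (p : (α × Bool) × (Fin (ℓ - 1) → Fin q)) : List (α × Bool) :=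
  p.1 :: ext e p.1 (List.ofFn p.2)

/-- the full word: prefix plus suffix determined by `f` -/
def fullw (f : ((α × Bool) × (Fin (ℓ - 1) → Fin q)) → (Fin k → Fin q))
    (p : (α × Bool) × (Fin (ℓ - 1) → Fin q)) : List (α × Bool) :=
  wordOf e ℓ p ++ ext e (lastc e p.1 (List.ofFn p.2)) (List.ofFn (f p))

/-- the group element -/
def gel (f : ((α × Bool) × (Fin (ℓ - 1) → Fin q)) → (Fin k → Fin q))
    (p : (α × Bool) × (Fin (ℓ - 1) → Fin q)) : FreeGroup α :=
  FreeGroup.mk (fullw e ℓ k f p)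

lemma wordOf_length (hℓ : 1 ≤ ℓ) (p : (α × Bool) × (Fin (ℓ - 1) → Fin q)) : (wordOf e ℓ p).length = ℓ := by
  simp [wordOf]; omega

lemma fullw_length (hℓ : 1 ≤ ℓ) (f : ((α × Bool) × (Fin (ℓ - 1) → Fin q)) → (Fin k → Fin q)) (p : (α × Bool) × (Fin (ℓ - 1) → Fin q)) : (fullw e ℓ k f p).length = ℓ + k := by
  simp [fullw, wordOf]; omega

lemma wordOf_inj (hinj : ∀ z, Function.Injective (e z)) {p p'}
    (h : wordOf e ℓ p = wordOf e ℓ p') : p = p' := by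
  simp only [wordOf, List.cons.injEq] at h
  obtain ⟨h1, h2⟩ := h
  obtain ⟨pa, pb⟩ := p; obtain ⟨pa', pb'⟩ := p'
  simp only at h1 h2
  subst h1
  exact Prod.ext rfl (List.ofFn_injective (ext_inj e hinj _ h2))

lemma rd_fullw (he : ∀ z i, e z i ≠ (z.1, !z.2)) (f : ((α × Bool) × (Fin (ℓ - 1) → Fin q)) → (Fin k → Fin q)) (p : (α × Bool) × (Fin (ℓ - 1) → Fin q)) : Rd (fullw e ℓ k f p) := by
  have := rd_cons_ext e he p.1 (List.ofFn p.2 ++ List.ofFn (f p))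
  rwa [ext_append, ← List.cons_append, ← wordOf, ← fullw] at this

lemma take_fullw (hℓ : 1 ≤ ℓ) (f : ((α × Bool) × (Fin (ℓ - 1) → Fin q)) → (Fin k → Fin q)) (p : (α × Bool) × (Fin (ℓ - 1) → Fin q)) : (fullw e ℓ k f p).take ℓ = wordOf e ℓ p := by
  rw [fullw, List.take_append_of_le_length (wordOf_length e ℓ hℓ p).ge,
    List.take_of_length_le (wordOf_length e ℓ hℓ p).le]

lemma fullw_inj (hℓ : 1 ≤ ℓ) (he : ∀ z i, e z i ≠ (z.1, !z.2)) (hinj : ∀ z, Function.Injective (e z))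
    (f : ((α × Bool) × (Fin (ℓ - 1) → Fin q)) → (Fin k → Fin q)) {p p'}
    (h : fullw e ℓ k f p = fullw e ℓ k f p') : p = p' := by
  apply wordOf_inj e ℓ hinj (p := p) (p' := p')
  have := congrArg (List.take ℓ) h
  rwa [take_fullw e ℓ k hℓ, take_fullw e ℓ k hℓ] at this

lemma gel_norm (hℓ : 1 ≤ ℓ) (he : ∀ z i, e z i ≠ (z.1, !z.2)) (f : ((α × Bool) × (Fin (ℓ - 1) → Fin q)) → (Fin k → Fin q)) (p : (α × Bool) × (Fin (ℓ - 1) → Fin q)) : (gel e ℓ k f p).norm = ℓ + k := by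
  rw [gel, norm_mk_of_rd (rd_fullw e ℓ k he f p), fullw_length e ℓ k hℓ]

lemma gel_inj (hℓ : 1 ≤ ℓ) (he : ∀ z i, e z i ≠ (z.1, !z.2)) (hinj : ∀ z, Function.Injective (e z))
    (f : ((α × Bool) × (Fin (ℓ - 1) → Fin q)) → (Fin k → Fin q)) {p p'}
    (h : gel e ℓ k f p = gel e ℓ k f p') : p = p' :=
  fullw_inj e ℓ k hℓ he hinj f (mk_inj_of_rd (rd_fullw e ℓ k he f p) (rd_fullw e ℓ k he f p') h)

/-- The key structural lemma: a collision of differences yields a "bad configuration". -/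
lemma collision (hℓ : 1 ≤ ℓ) (he : ∀ z i, e z i ≠ (z.1, !z.2)) (hinj : ∀ z, Function.Injective (e z))
    {f : ((α × Bool) × (Fin (ℓ - 1) → Fin q)) → (Fin k → Fin q)}
    {x y x' y' : (α × Bool) × (Fin (ℓ - 1) → Fin q)}
    (hxy : x ≠ y) (hxy' : x' ≠ y')
    (hdiff : (gel e ℓ k f x)⁻¹ * gel e ℓ k f y = (gel e ℓ k f x')⁻¹ * gel e ℓ k f y')
    (hne : ¬(x = x' ∧ y = y')) :
    ∃ j, j < ℓ ∧ x ≠ x' ∧ y ≠ y' ∧ f x = f x' ∧ f y = f y' ∧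
      (wordOf e ℓ x).drop j = (wordOf e ℓ x').drop j ∧
      (wordOf e ℓ y).drop j = (wordOf e ℓ y').drop j ∧
      (wordOf e ℓ x).take j = (wordOf e ℓ y).take j ∧
      (wordOf e ℓ x').take j = (wordOf e ℓ y').take j ∧
      (wordOf e ℓ x)[j]? ≠ (wordOf e ℓ y)[j]? := by
  classical
  have hFxy : fullw e ℓ k f x ≠ fullw e ℓ k f y := fun hc => hxy (fullw_inj e ℓ k hℓ he hinj f hc)
  have hFxy' : fullw e ℓ k f x' ≠ fullw e ℓ k f y' := fun hc => hxy' (fullw_inj e ℓ k hℓ he hinj f hc)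
  have hlen : ∀ p, (fullw e ℓ k f p).length = ℓ + k := fullw_length e ℓ k hℓ f
  obtain ⟨P, A, B, a, b, hFx, hFy, hab, hAB⟩ :=
    exists_common_prefix ((hlen x).trans (hlen y).symm) hFxy
  obtain ⟨P', A', B', a', b', hFx', hFy', hab', hAB'⟩ :=
    exists_common_prefix ((hlen x').trans (hlen y').symm) hFxy'
  -- reducedness of tails
  have rdtail : ∀ (p) (Q : List (α × Bool)) (c : α × Bool) (C : List (α × Bool)),
      fullw e ℓ k f p = Q ++ c :: C → Rd (c :: C) := by
    intro p Q c C hp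
    have := (rd_fullw e ℓ k he f p).drop Q.length
    rwa [hp, List.drop_left] at this
  have rdx := rdtail x P a A hFx
  have rdy := rdtail y P b B hFy
  have rdx' := rdtail x' P' a' A' hFx'
  have rdy' := rdtail y' P' b' B' hFy'
  -- difference formula
  have hdiffw : ∀ (Q C D : List (α × Bool)),
      (FreeGroup.mk (Q ++ C))⁻¹ * FreeGroup.mk (Q ++ D)
        = FreeGroup.mk (FreeGroup.invRev C ++ D) := by
    intro Q C D
    rw [show FreeGroup.mk (Q ++ C) = FreeGroup.mk Q * FreeGroup.mk C from (FreeGroup.mul_mk).symm,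
      show FreeGroup.mk (Q ++ D) = FreeGroup.mk Q * FreeGroup.mk D from (FreeGroup.mul_mk).symm,
      show FreeGroup.mk (FreeGroup.invRev C ++ D)
          = FreeGroup.mk (FreeGroup.invRev C) * FreeGroup.mk D from (FreeGroup.mul_mk).symm,
      ← FreeGroup.inv_mk]
    group
  have key : FreeGroup.invRev (a :: A) ++ (b :: B)
      = FreeGroup.invRev (a' :: A') ++ (b' :: B') := by
    apply mk_inj_of_rd (rd_diff rdx rdy hab) (rd_diff rdx' rdy' hab')
    have e1 : (gel e ℓ k f x)⁻¹ * gel e ℓ k f y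
        = FreeGroup.mk (FreeGroup.invRev (a :: A) ++ (b :: B)) := by
      rw [gel, gel, hFx, hFy, hdiffw]
    have e2 : (gel e ℓ k f x')⁻¹ * gel e ℓ k f y'
        = FreeGroup.mk (FreeGroup.invRev (a' :: A') ++ (b' :: B')) := by
      rw [gel, gel, hFx', hFy', hdiffw]
    exact (e1.symm.trans hdiff).trans e2
  -- length bookkeeping
  have hlenx := hFx ▸ hlen x
  have hleny := hFy ▸ hlen y
  have hlenx' := hFx' ▸ hlen x'
  have hleny' := hFy' ▸ hlen y'
  simp only [List.length_append, List.length_cons] at hlenx hleny hlenx' hleny'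
  have hKlen := congrArg List.length key
  simp only [List.length_append, FreeGroup.invRev_length, List.length_cons] at hKlen
  have hAA' : A.length = A'.length := by omega
  have hPP' : P.length = P'.length := by omega
  -- split the equality
  have hsplit := List.append_inj key (by simp [FreeGroup.invRev_length, hAA'])
  have haA : (a : α × Bool) :: A = a' :: A' := FreeGroup.invRev_injective hsplit.1
  have hbB : (b : α × Bool) :: B = b' :: B' := hsplit.2
  -- j < ℓ
  have hjℓ : P.length < ℓ := by
    by_contra hc
    push_neg at hc
    apply hxy
    apply wordOf_inj e ℓ hinj (p := x) (p' := y)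
    rw [← take_fullw e ℓ k hℓ f x, ← take_fullw e ℓ k hℓ f y, hFx, hFy,
      List.take_append_of_le_length (by omega), List.take_append_of_le_length (by omega)]
  have hjle : P.length ≤ ℓ := le_of_lt hjℓ
  -- drops of full words agree
  have hdx : (fullw e ℓ k f x).drop P.length = (fullw e ℓ k f x').drop P.length := by
    rw [hFx, hFx', List.drop_left]
    rw [show P.length = P'.length from hPP', List.drop_left, haA]
  have hdy : (fullw e ℓ k f y).drop P.length = (fullw e ℓ k f y').drop P.length := by
    rw [hFy, hFy', List.drop_left]
    rw [show P.length = P'.length from hPP', List.drop_left, hbB]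
  -- decompose across the prefix/suffix boundary
  have hsplitdrop : ∀ p, (fullw e ℓ k f p).drop P.length
      = (wordOf e ℓ p).drop P.length
        ++ ext e (lastc e p.1 (List.ofFn p.2)) (List.ofFn (f p)) := by
    intro p
    rw [fullw, List.drop_append_of_le_length (by rw [wordOf_length e ℓ hℓ]; exact hjle)]
  have hxx'p := List.append_inj ((hsplitdrop x).symm.trans (hdx.trans (hsplitdrop x')))
      (by simp [wordOf_length e ℓ hℓ])
  have hyy'p := List.append_inj ((hsplitdrop y).symm.trans (hdy.trans (hsplitdrop y')))
      (by simp [wordOf_length e ℓ hℓ])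
  -- the last letters of the prefix words agree, hence equal codes
  have hlastagree : ∀ p p', (wordOf e ℓ p).drop P.length = (wordOf e ℓ p').drop P.length →
      lastc e p.1 (List.ofFn p.2) = lastc e p'.1 (List.ofFn p'.2) := by
    intro p p' hdj
    have h1 : ((wordOf e ℓ p).drop P.length).getLast? = (wordOf e ℓ p).getLast? := by
      rw [List.getLast?_drop]
      simp [Nat.not_le.mpr (show P.length < (wordOf e ℓ p).length by
        rw [wordOf_length e ℓ hℓ]; exact hjℓ)]
    have h2 : ((wordOf e ℓ p').drop P.length).getLast? = (wordOf e ℓ p').getLast? := by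
      rw [List.getLast?_drop]
      simp [Nat.not_le.mpr (show P.length < (wordOf e ℓ p').length by
        rw [wordOf_length e ℓ hℓ]; exact hjℓ)]
    have h3 := congrArg List.getLast? hdj
    rw [h1, h2] at h3
    rw [wordOf, wordOf, getLast?_cons_ext, getLast?_cons_ext] at h3
    exact Option.some_injective _ h3
  have hfx : f x = f x' := by
    have h4 := hxx'p.2
    rw [hlastagree x x' hxx'p.1] at h4
    exact List.ofFn_injective (ext_inj e hinj _ h4)
  have hfy : f y = f y' := by
    have h4 := hyy'p.2
    rw [hlastagree y y' hyy'p.1] at h4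
    exact List.ofFn_injective (ext_inj e hinj _ h4)
  -- takes
  have htakeword : ∀ p, (wordOf e ℓ p).take P.length = (fullw e ℓ k f p).take P.length := by
    intro p
    rw [fullw, List.take_append_of_le_length (by rw [wordOf_length e ℓ hℓ]; exact hjle)]
  have htxy : (wordOf e ℓ x).take P.length = (wordOf e ℓ y).take P.length := by
    rw [htakeword, htakeword, hFx, hFy, List.take_left,
      List.take_append_of_le_length (le_refl _), List.take_length]
  have htxy' : (wordOf e ℓ x').take P.length = (wordOf e ℓ y').take P.length := by
    rw [htakeword, htakeword, hFx', hFy']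
    rw [show P.length = P'.length from hPP', List.take_left,
      List.take_append_of_le_length (le_refl _), List.take_length]
  -- the letters at position j differ
  have hgetfull : ∀ p, (wordOf e ℓ p)[P.length]? = (fullw e ℓ k f p)[P.length]? := by
    intro p
    rw [fullw, List.getElem?_append_left (by rw [wordOf_length e ℓ hℓ]; exact hjℓ)]
  have hgetx : (wordOf e ℓ x)[P.length]? = some a := by
    rw [hgetfull, hFx, List.getElem?_append_right (le_refl _)]
    simp
  have hgety : (wordOf e ℓ y)[P.length]? = some b := by
    rw [hgetfull, hFy, List.getElem?_append_right (le_refl _)]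
    simp
  -- x ≠ x' and y ≠ y'
  have hx_imp : x = x' → y = y' := by
    intro hxx
    apply fullw_inj e ℓ k hℓ he hinj f (p := y) (p' := y')
    have hFeq : (P : List (α × Bool)) ++ a :: A = P' ++ a' :: A' := by
      rw [← hFx, ← hFx', hxx]
    have hP : P = P' := (List.append_inj hFeq hPP').1
    rw [hFy, hFy', hP, hbB]
  have hy_imp : y = y' → x = x' := by
    intro hyy
    apply fullw_inj e ℓ k hℓ he hinj f (p := x) (p' := x')
    have hFeq : (P : List (α × Bool)) ++ b :: B = P' ++ b' :: B' := by
      rw [← hFy, ← hFy', hyy]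
    have hP : P = P' := (List.append_inj hFeq hPP').1
    rw [hFx, hFx', hP, haA]
  refine ⟨P.length, hjℓ, fun hc => hne ⟨hc, hx_imp hc⟩, fun hc => hne ⟨hy_imp hc, hc⟩,
    hfx, hfy, hxx'p.1, hyy'p.1, htxy, htxy', ?_⟩
  rw [hgetx, hgety]
  exact fun hc => hab (Option.some_injective _ hc)

end Words

/-! ### Counting -/

section Pinned
open Finset

lemma card_pinned {β γ : Type*} [Fintype β] [DecidableEq β] [Fintype γ] [DecidableEq γ]
    {x x' y y' : β} (hx : x ≠ x') (hy : y ≠ y') (hx'y' : x' ≠ y') (hxy' : x ≠ y')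
    (hyx' : y ≠ x') :
    (Finset.univ.filter (fun f : β → γ => f x = f x' ∧ f y = f y')).card
      = Fintype.card γ ^ (Fintype.card β - 2) := by
  classical
  have hequiv : {f : β → γ // f x = f x' ∧ f y = f y'}
      ≃ ({u : β // u ≠ x' ∧ u ≠ y'} → γ) := by
    refine ⟨fun f u => f.1 u.1, fun g => ⟨fun u =>
      if h : u = x' then g ⟨x, ⟨hx, hxy'⟩⟩
      else if h' : u = y' then g ⟨y, ⟨hyx', hy⟩⟩
      else g ⟨u, ⟨h, h'⟩⟩, ?_, ?_⟩, ?_, ?_⟩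
    · beta_reduce
      rw [dif_neg hx, dif_neg hxy', dif_pos rfl]
    · beta_reduce
      rw [dif_neg hyx', dif_neg hy, dif_neg hx'y'.symm, dif_pos rfl]
    · intro f
      ext u
      by_cases h : u = x'
      · subst h; simpa using f.2.1
      · by_cases h' : u = y'
        · subst h'; simpa [h] using f.2.2
        · simp [h, h']
    · intro g
      ext u
      obtain ⟨u, hu1, hu2⟩ := u
      simp [hu1, hu2]
  have h1 : (Finset.univ.filter (fun f : β → γ => f x = f x' ∧ f y = f y')).card
      = Fintype.card {f : β → γ // f x = f x' ∧ f y = f y'} :=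
    (Fintype.card_subtype _).symm
  rw [h1, Fintype.card_congr hequiv, Fintype.card_fun]
  congr 1
  have h2 : (Finset.univ.filter (fun u : β => u ≠ x' ∧ u ≠ y')) = Finset.univ \ {x', y'} := by
    ext u; simp [not_or]
  rw [Fintype.card_subtype, h2, Finset.card_sdiff_of_subset (by simp)]
  simp [Finset.card_pair hx'y', Finset.card_univ]

end Pinned

section Counting
open Finset
variable {α : Type*} [DecidableEq α] [Fintype α] {q : ℕ}
variable (e : (α × Bool) → Fin q → (α × Bool)) (ℓ k : ℕ)

/-- static part of a bad configuration -/
def StatCond (j : ℕ) (x x' y y' : (α × Bool) × (Fin (ℓ - 1) → Fin q)) : Prop :=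
  x ≠ x' ∧ y ≠ y' ∧
  (wordOf e ℓ x).drop j = (wordOf e ℓ x').drop j ∧
  (wordOf e ℓ y).drop j = (wordOf e ℓ y').drop j ∧
  (wordOf e ℓ x).take j = (wordOf e ℓ y).take j ∧
  (wordOf e ℓ x').take j = (wordOf e ℓ y').take j ∧
  (wordOf e ℓ x)[j]? ≠ (wordOf e ℓ y)[j]?

instance statCond_dec (j : ℕ) (x x' y y' : (α × Bool) × (Fin (ℓ - 1) → Fin q)) :
    Decidable (StatCond e ℓ j x x' y y') := by
  unfold StatCond; infer_instance

/-- static bad tuples -/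
def tupSet : Finset (ℕ × ((α × Bool) × (Fin (ℓ - 1) → Fin q))
    × ((α × Bool) × (Fin (ℓ - 1) → Fin q)) × ((α × Bool) × (Fin (ℓ - 1) → Fin q))
    × ((α × Bool) × (Fin (ℓ - 1) → Fin q))) :=
  (Finset.range ℓ ×ˢ Finset.univ).filter fun t =>
    StatCond e ℓ t.1 t.2.1 t.2.2.1 t.2.2.2.1 t.2.2.2.2

/-- bad tuples for a given suffix assignment -/
def badTup (f : ((α × Bool) × (Fin (ℓ - 1) → Fin q)) → (Fin k → Fin q)) :
    Finset (ℕ × ((α × Bool) × (Fin (ℓ - 1) → Fin q))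
      × ((α × Bool) × (Fin (ℓ - 1) → Fin q)) × ((α × Bool) × (Fin (ℓ - 1) → Fin q))
      × ((α × Bool) × (Fin (ℓ - 1) → Fin q))) :=
  (tupSet e ℓ).filter fun t => f t.2.1 = f t.2.2.1 ∧ f t.2.2.2.1 = f t.2.2.2.2

variable {e ℓ k}

lemma tupSet_card_le (hinj : ∀ z, Function.Injective (e z)) :
    (tupSet e ℓ).card ≤ ℓ * (Fintype.card ((α × Bool) × (Fin (ℓ - 1) → Fin q)))^2 := by
  classical
  have hmap : ∀ t ∈ tupSet e ℓ, (t.1, t.2.1, t.2.2.2.2) ∈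
      (Finset.range ℓ ×ˢ (Finset.univ ×ˢ Finset.univ) :
        Finset (ℕ × ((α × Bool) × (Fin (ℓ - 1) → Fin q))
          × ((α × Bool) × (Fin (ℓ - 1) → Fin q)))) := by
    intro t ht
    simp only [tupSet, Finset.mem_filter, Finset.mem_product, Finset.mem_range] at ht
    simp only [Finset.mem_product, Finset.mem_range, Finset.mem_univ, and_true]
    exact ht.1.1
  have hinjOn : Set.InjOn (fun t : (ℕ × ((α × Bool) × (Fin (ℓ - 1) → Fin q))
      × ((α × Bool) × (Fin (ℓ - 1) → Fin q)) × ((α × Bool) × (Fin (ℓ - 1) → Fin q))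
      × ((α × Bool) × (Fin (ℓ - 1) → Fin q))) => (t.1, t.2.1, t.2.2.2.2))
      ↑(tupSet e ℓ) := by
    rintro ⟨j, x, x', y, y'⟩ ht ⟨j₂, x₂, x₂', y₂, y₂'⟩ hs hts
    simp only [Prod.mk.injEq] at hts
    obtain ⟨rfl, rfl, rfl⟩ := hts
    change (j, x, x', y, y') ∈ tupSet e ℓ at ht
    change (j, x, x₂', y₂, y') ∈ tupSet e ℓ at hs
    rw [tupSet, Finset.mem_filter] at ht hs
    obtain ⟨-, hx1, hy1, hdx1, hdy1, ht1, ht1', hg1⟩ := ht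
    obtain ⟨-, hx2, hy2, hdx2, hdy2, ht2, ht2', hg2⟩ := hs
    have hx' : x' = x₂' := by
      apply wordOf_inj e ℓ hinj
      have r1 : wordOf e ℓ x' = (wordOf e ℓ y').take j ++ (wordOf e ℓ x).drop j := by
        conv_lhs => rw [← List.take_append_drop j (wordOf e ℓ x')]
        rw [ht1', ← hdx1]
      have r2 : wordOf e ℓ x₂' = (wordOf e ℓ y').take j ++ (wordOf e ℓ x).drop j := by
        conv_lhs => rw [← List.take_append_drop j (wordOf e ℓ x₂')]
        rw [ht2', ← hdx2]
      rw [r1, r2]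
    have hy : y = y₂ := by
      apply wordOf_inj e ℓ hinj
      have r1 : wordOf e ℓ y = (wordOf e ℓ x).take j ++ (wordOf e ℓ y').drop j := by
        conv_lhs => rw [← List.take_append_drop j (wordOf e ℓ y)]
        rw [← ht1, hdy1]
      have r2 : wordOf e ℓ y₂ = (wordOf e ℓ x).take j ++ (wordOf e ℓ y').drop j := by
        conv_lhs => rw [← List.take_append_drop j (wordOf e ℓ y₂)]
        rw [← ht2, hdy2]
      rw [r1, r2]
    simp [hx', hy]
  calc (tupSet e ℓ).card ≤ _ := Finset.card_le_card_of_injOn _ hmap hinjOn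
    _ ≤ ℓ * (Fintype.card ((α × Bool) × (Fin (ℓ - 1) → Fin q)))^2 := by
      rw [Finset.card_product, Finset.card_product, Finset.card_range]
      simp [sq, Finset.card_univ, mul_assoc]

lemma stat_distinct {j : ℕ} {x x' y y' : (α × Bool) × (Fin (ℓ - 1) → Fin q)}
    (h : StatCond e ℓ j x x' y y') :
    x ≠ x' ∧ y ≠ y' ∧ x' ≠ y' ∧ x ≠ y' ∧ y ≠ x' := by
  obtain ⟨hx, hy, hdx, hdy, -, -, hg⟩ := h
  have gx : (wordOf e ℓ x)[j]? = (wordOf e ℓ x')[j]? := by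
    have h0 := congrArg (fun l : List (α × Bool) => l[0]?) hdx
    simpa using h0
  have gy : (wordOf e ℓ y)[j]? = (wordOf e ℓ y')[j]? := by
    have h0 := congrArg (fun l : List (α × Bool) => l[0]?) hdy
    simpa using h0
  refine ⟨hx, hy, ?_, ?_, ?_⟩
  · rintro rfl; exact hg (gx.trans gy.symm)
  · rintro rfl; exact hg gy.symm
  · rintro rfl; exact hg gx

lemma sum_badTup_le (hinj : ∀ z, Function.Injective (e z)) :
    ∑ f : ((α × Bool) × (Fin (ℓ - 1) → Fin q)) → (Fin k → Fin q), (badTup e ℓ k f).card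
      ≤ (tupSet e ℓ).card * (Fintype.card (Fin k → Fin q))
          ^ (Fintype.card ((α × Bool) × (Fin (ℓ - 1) → Fin q)) - 2) := by
  classical
  have hswap : ∑ f : ((α × Bool) × (Fin (ℓ - 1) → Fin q)) → (Fin k → Fin q),
      (badTup e ℓ k f).card
      = ∑ t ∈ tupSet e ℓ, (Finset.univ.filter
          (fun f : ((α × Bool) × (Fin (ℓ - 1) → Fin q)) → (Fin k → Fin q) =>
            f t.2.1 = f t.2.2.1 ∧ f t.2.2.2.1 = f t.2.2.2.2)).card := by
    simp only [badTup, Finset.card_filter]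
    rw [Finset.sum_comm]
  rw [hswap]
  have hb : ∀ t ∈ tupSet e ℓ, (Finset.univ.filter
      (fun f : ((α × Bool) × (Fin (ℓ - 1) → Fin q)) → (Fin k → Fin q) =>
        f t.2.1 = f t.2.2.1 ∧ f t.2.2.2.1 = f t.2.2.2.2)).card
      ≤ (Fintype.card (Fin k → Fin q))
          ^ (Fintype.card ((α × Bool) × (Fin (ℓ - 1) → Fin q)) - 2) := by
    intro t ht
    simp only [tupSet, Finset.mem_filter] at ht
    obtain ⟨hx, hy, hx'y', hxy', hyx'⟩ := stat_distinct ht.2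
    exact le_of_eq (card_pinned hx hy hx'y' hxy' hyx')
  calc ∑ t ∈ tupSet e ℓ, _ ≤ _ := Finset.sum_le_sum hb
    _ = (tupSet e ℓ).card * _ := by rw [Finset.sum_const, smul_eq_mul]

lemma exists_good_f (hq : 0 < q) (hinj : ∀ z, Function.Injective (e z))
    (h2 : 2 ≤ Fintype.card ((α × Bool) × (Fin (ℓ - 1) → Fin q))) :
    ∃ f : ((α × Bool) × (Fin (ℓ - 1) → Fin q)) → (Fin k → Fin q),
      (badTup e ℓ k f).card * (Fintype.card (Fin k → Fin q))^2 ≤ (tupSet e ℓ).card := by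
  classical
  by_contra hcon
  push_neg at hcon
  have : Nonempty (((α × Bool) × (Fin (ℓ - 1) → Fin q)) → (Fin k → Fin q)) :=
    ⟨fun _ _ => ⟨0, hq⟩⟩
  have hne : (Finset.univ : Finset (((α × Bool) × (Fin (ℓ - 1) → Fin q)) → (Fin k → Fin q))).Nonempty :=
    Finset.univ_nonempty
  have hlt := Finset.sum_lt_sum_of_nonempty hne (fun f _ => hcon f)
  have h1 : ∑ _f : ((α × Bool) × (Fin (ℓ - 1) → Fin q)) → (Fin k → Fin q), (tupSet e ℓ).card
      = (Fintype.card (Fin k → Fin q))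
          ^ (Fintype.card ((α × Bool) × (Fin (ℓ - 1) → Fin q))) * (tupSet e ℓ).card := by
    rw [Finset.sum_const, smul_eq_mul, Finset.card_univ, Fintype.card_fun]
  have h2' : ∑ f : ((α × Bool) × (Fin (ℓ - 1) → Fin q)) → (Fin k → Fin q),
      (badTup e ℓ k f).card * (Fintype.card (Fin k → Fin q))^2
      = (∑ f : ((α × Bool) × (Fin (ℓ - 1) → Fin q)) → (Fin k → Fin q),
          (badTup e ℓ k f).card) * (Fintype.card (Fin k → Fin q))^2 := by
    rw [Finset.sum_mul]
  rw [h1, h2'] at hlt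
  have h3 := Nat.mul_le_mul_right ((Fintype.card (Fin k → Fin q))^2) (sum_badTup_le (e := e) (ℓ := ℓ) (k := k) hinj)
  have h4 : (tupSet e ℓ).card * (Fintype.card (Fin k → Fin q))
        ^ (Fintype.card ((α × Bool) × (Fin (ℓ - 1) → Fin q)) - 2)
        * (Fintype.card (Fin k → Fin q))^2
      = (Fintype.card (Fin k → Fin q))
          ^ (Fintype.card ((α × Bool) × (Fin (ℓ - 1) → Fin q))) * (tupSet e ℓ).card := by
    rw [mul_assoc, ← pow_add]
    rw [Nat.sub_add_cancel h2, mul_comm]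
  exact absurd hlt (not_lt.mpr (h3.trans (le_of_eq h4)))
end Counting

/-! ### The construction -/

section Construction
open Finset
variable {α : Type*} [DecidableEq α] [Fintype α] {q : ℕ}
variable {e : (α × Bool) → Fin q → (α × Bool)} {ℓ k : ℕ}

/-- surviving parameters -/
def goodSet (e : (α × Bool) → Fin q → (α × Bool)) (ℓ k : ℕ)
    (f : ((α × Bool) × (Fin (ℓ - 1) → Fin q)) → (Fin k → Fin q)) :
    Finset ((α × Bool) × (Fin (ℓ - 1) → Fin q)) :=
  Finset.univ \ (badTup e ℓ k f).image (fun t => t.2.1)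

lemma goodSet_card (f : ((α × Bool) × (Fin (ℓ - 1) → Fin q)) → (Fin k → Fin q)) :
    Fintype.card ((α × Bool) × (Fin (ℓ - 1) → Fin q))
      ≤ (goodSet e ℓ k f).card + (badTup e ℓ k f).card := by
  have h1 : ((badTup e ℓ k f).image (fun t => t.2.1)).card ≤ (badTup e ℓ k f).card :=
    Finset.card_image_le
  have h2 := Finset.card_sdiff_add_card_eq_card
    (Finset.subset_univ ((badTup e ℓ k f).image (fun t => t.2.1)))
  rw [Finset.card_univ] at h2
  rw [goodSet]
  omega

lemma good_no_collision (hℓ : 1 ≤ ℓ) (he : ∀ z i, e z i ≠ (z.1, !z.2))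
    (hinj : ∀ z, Function.Injective (e z))
    {f : ((α × Bool) × (Fin (ℓ - 1) → Fin q)) → (Fin k → Fin q)}
    {x y x' y' : (α × Bool) × (Fin (ℓ - 1) → Fin q)}
    (hx : x ∈ goodSet e ℓ k f)
    (hxy : x ≠ y) (hxy' : x' ≠ y')
    (hdiff : (gel e ℓ k f x)⁻¹ * gel e ℓ k f y = (gel e ℓ k f x')⁻¹ * gel e ℓ k f y') :
    x = x' ∧ y = y' := by
  classical
  by_contra hne
  obtain ⟨j, hjℓ, hxx', hyy', hfx, hfy, hdx, hdy, htxy, htxy', hget⟩ :=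
    collision e ℓ k hℓ he hinj hxy hxy' hdiff hne
  have hmem : (j, x, x', y, y') ∈ badTup e ℓ k f := by
    rw [badTup, Finset.mem_filter]
    refine ⟨?_, hfx, hfy⟩
    rw [tupSet, Finset.mem_filter]
    exact ⟨by simp [Finset.mem_range, hjℓ], hxx', hyy', hdx, hdy, htxy, htxy', hget⟩
  have : x ∈ (badTup e ℓ k f).image (fun t => t.2.1) :=
    Finset.mem_image.mpr ⟨(j, x, x', y, y'), hmem, rfl⟩
  rw [goodSet, Finset.mem_sdiff] at hx
  exact hx.2 this

/-- The main construction: a large finite set of free-group elements of fixed norm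
whose differences are pairwise distinct. -/
lemma construction (hℓ : 1 ≤ ℓ) (hq : 0 < q) (he : ∀ z i, e z i ≠ (z.1, !z.2))
    (hinj : ∀ z, Function.Injective (e z))
    (h2 : 2 ≤ Fintype.card ((α × Bool) × (Fin (ℓ - 1) → Fin q)))
    (hbal : 2 * ℓ * Fintype.card ((α × Bool) × (Fin (ℓ - 1) → Fin q))
      ≤ (Fintype.card (Fin k → Fin q))^2) :
    ∃ D : Finset (FreeGroup α),
      (∀ g ∈ D, ∀ h ∈ D, ∀ g' ∈ D, ∀ h' ∈ D,
        g ≠ h → g' ≠ h' → g⁻¹ * h = g'⁻¹ * h' → g = g' ∧ h = h') ∧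
      (∀ g ∈ D, g.norm = ℓ + k) ∧
      Fintype.card ((α × Bool) × (Fin (ℓ - 1) → Fin q)) ≤ 2 * D.card := by
  classical
  obtain ⟨f, hf⟩ := exists_good_f (e := e) (ℓ := ℓ) (k := k) hq hinj h2
  refine ⟨(goodSet e ℓ k f).image (gel e ℓ k f), ?_, ?_, ?_⟩
  · intro g hg h hh g' hg' h' hh' hgh hgh' hd
    obtain ⟨x, hxmem, rfl⟩ := Finset.mem_image.mp hg
    obtain ⟨y, hymem, rfl⟩ := Finset.mem_image.mp hh
    obtain ⟨x', hxmem', rfl⟩ := Finset.mem_image.mp hg'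
    obtain ⟨y', hymem', rfl⟩ := Finset.mem_image.mp hh'
    have hxy : x ≠ y := fun hc => hgh (by rw [hc])
    have hxy' : x' ≠ y' := fun hc => hgh' (by rw [hc])
    obtain ⟨h1, h2⟩ := good_no_collision hℓ he hinj hxmem hxy hxy' hd
    exact ⟨by rw [h1], by rw [h2]⟩
  · intro g hg
    obtain ⟨x, hxmem, rfl⟩ := Finset.mem_image.mp hg
    exact gel_norm e ℓ k hℓ he f x
  · have himg : ((goodSet e ℓ k f).image (gel e ℓ k f)).card = (goodSet e ℓ k f).card :=
      Finset.card_image_of_injOn (fun p _ p' _ hpp' => gel_inj e ℓ k hℓ he hinj f hpp')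
    rw [himg]
    have hA := goodSet_card (e := e) f
    have hB := hf
    have hC := tupSet_card_le (e := e) (ℓ := ℓ) hinj
    -- badTup.card * T^2 ≤ tupSet.card ≤ ℓ * P^2 and 2 ℓ P ≤ T^2 imply 2*badTup.card ≤ P
    set P := Fintype.card ((α × Bool) × (Fin (ℓ - 1) → Fin q)) with hP
    set T := Fintype.card (Fin k → Fin q) with hT
    set B := (badTup e ℓ k f).card with hBdef
    have key : 2 * B ≤ P := by
      by_contra hcon
      push_neg at hcon
      have c1 : B * (2 * ℓ * P) ≤ B * T^2 := Nat.mul_le_mul_left B hbal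
      have c2 : B * T^2 ≤ ℓ * P^2 := hB.trans hC
      have c3 : (ℓ * P) * (2 * B) = B * (2 * ℓ * P) := by ring
      have c4 : ℓ * P^2 = (ℓ * P) * P := by ring
      have c5 : (ℓ * P) * (2 * B) ≤ (ℓ * P) * P := by
        rw [c3, ← c4]
        exact c1.trans c2
      have hℓP : 0 < ℓ * P := Nat.mul_pos (by omega) (by omega)
      have h2B := Nat.le_of_mul_le_mul_left c5 hℓP
      omega
    omega
end Construction

/-! ### Final assembly -/

section Final
open Finset

lemma exists_e {α : Type*} [Fintype α] [DecidableEq α] {n : ℕ} (hn : 2 ≤ n)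
    (hcard : Fintype.card α = n) :
    ∃ e : (α × Bool) → Fin (2 * n - 1) → (α × Bool),
      (∀ z i, e z i ≠ (z.1, !z.2)) ∧ (∀ z, Function.Injective (e z)) := by
  classical
  have hcard2 : ∀ z : α × Bool, Fintype.card {l : α × Bool // l ≠ (z.1, !z.2)} = 2 * n - 1 := by
    intro z
    rw [Fintype.card_subtype_compl, Fintype.card_subtype_eq, Fintype.card_prod,
      Fintype.card_bool, hcard]
    omega
  have E := fun z : α × Bool => Fintype.equivFinOfCardEq (hcard2 z)
  refine ⟨fun z i => ((E z).symm i).1, fun z i => ((E z).symm i).2, fun z a b hab => ?_⟩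
  exact (E z).symm.injective (Subtype.ext hab)

lemma cardPar {α : Type*} [Fintype α] [DecidableEq α] {n : ℕ} (hcard : Fintype.card α = n)
    (q r : ℕ) :
    Fintype.card ((α × Bool) × (Fin r → Fin q)) = 2 * n * q ^ r := by
  rw [Fintype.card_prod, Fintype.card_prod, Fintype.card_bool, Fintype.card_fun,
    Fintype.card_fin, Fintype.card_fin, hcard]
  ring

lemma cardT (q k : ℕ) : Fintype.card (Fin k → Fin q) = q ^ k := by
  rw [Fintype.card_fun, Fintype.card_fin, Fintype.card_fin]

end Final
end DDCaux

set_option maxHeartbeats 2000000 in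
theorem stmt15 (α : Type*) [Fintype α] [DecidableEq α] (n : ℕ) (hn : 2 ≤ n)
    (hcard : Fintype.card α = n) (d : ℕ) (hd : 0 < d) (hdeven : Even d) :
    ∃ D : Set (FreeGroup α), IsDDC D ∧
      (∀ g ∈ D, ∀ h ∈ D, (g⁻¹ * h).norm ≤ d) ∧
      (2 * n : ℝ) * (2 * n - 1 : ℝ) ^
          ((d : ℝ) / 3 - (4 / 3) * Real.logb (2 * n - 1) ((d : ℝ) / 3) - 5)
        ≤ (D.ncard : ℝ) := by
  classical
  set q : ℕ := 2 * n - 1 with hqdef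
  obtain ⟨e, he, hinj⟩ := DDCaux.exists_e hn hcard
  have hq3 : 3 ≤ q := by omega
  have hq1 : 1 < q := by omega
  have hposq : 0 < q := by omega
  have hnR : (2:ℝ) ≤ (n:ℝ) := by exact_mod_cast hn
  have hqR : (q : ℝ) = 2 * (n : ℝ) - 1 := by
    have h1 : (1:ℕ) ≤ 2 * n := by omega
    rw [hqdef]
    push_cast [h1]
    ring
  have hbR : (1:ℝ) < 2 * (n:ℝ) - 1 := by linarith
  have hbpos : (0:ℝ) < 2 * (n:ℝ) - 1 := by linarith
  have hd2 : 2 ≤ d := by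
    obtain ⟨m, hm⟩ := hdeven
    omega
  have hdR : (2:ℝ) ≤ (d:ℝ) := by exact_mod_cast hd2
  set L : ℝ := Real.logb (2 * (n:ℝ) - 1) ((d : ℝ) / 3) with hLdef
  set E : ℝ := (d : ℝ) / 3 - (4 / 3) * L - 5 with hEdef
  -- a lower bound for L
  have hLlow : (-1 : ℝ) ≤ L := by
    rw [hLdef]
    rw [Real.le_logb_iff_rpow_le hbR (by linarith)]
    rw [Real.rpow_neg_one]
    have h1 : (2*(n:ℝ)-1)⁻¹ ≤ 3⁻¹ := by
      apply inv_anti₀ (by norm_num)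
      linarith
    have h2 : (3:ℝ)⁻¹ ≤ (d:ℝ)/3 := by
      rw [inv_eq_one_div]
      linarith
    linarith
  by_cases hE : E ≤ -1
  · -- trivial configuration of size 2
    have hα : Nonempty α := Fintype.card_pos_iff.mp (by omega)
    obtain ⟨a⟩ := hα
    have hww : (FreeGroup.of a : FreeGroup α) ≠ (FreeGroup.of a)⁻¹ := by
      intro hc
      have h2 := congrArg FreeGroup.toWord hc
      rw [FreeGroup.toWord_of, FreeGroup.toWord_inv, FreeGroup.toWord_of] at h2
      simp [FreeGroup.invRev] at h2
    have hww' : ((FreeGroup.of a)⁻¹ : FreeGroup α) ≠ FreeGroup.of a := hww.symm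
    have hone : (1 : FreeGroup α) ≠ FreeGroup.of a := by
      intro hc
      have h2 := congrArg FreeGroup.toWord hc
      rw [FreeGroup.toWord_one, FreeGroup.toWord_of] at h2
      simp at h2
    refine ⟨{1, FreeGroup.of a}, ?_, ?_, ?_⟩
    · intro g hg h hh g' hg' h' hh' hgh hgh' hdiff
      simp only [Set.mem_insert_iff, Set.mem_singleton_iff] at hg hh hg' hh'
      rcases hg with rfl|rfl <;> rcases hh with rfl|rfl <;> rcases hg' with rfl|rfl <;>
        rcases hh' with rfl|rfl <;> simp_all
    · have hno : ∀ u ∈ ({1, FreeGroup.of a} : Set (FreeGroup α)), u.norm ≤ 1 := by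
        intro u hu
        simp only [Set.mem_insert_iff, Set.mem_singleton_iff] at hu
        rcases hu with rfl|rfl
        · simp [FreeGroup.norm_one]
        · simp [FreeGroup.norm_of]
      intro g hg h hh
      calc (g⁻¹*h).norm ≤ (g⁻¹).norm + h.norm := FreeGroup.norm_mul_le _ _
        _ = g.norm + h.norm := by rw [FreeGroup.norm_inv_eq]
        _ ≤ 1 + 1 := add_le_add (hno g hg) (hno h hh)
        _ ≤ d := by omega
    · rw [Set.ncard_pair hone]
      have p1 : (0:ℝ) < (2*(n:ℝ)-1)^E := Real.rpow_pos_of_pos hbpos _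
      have h1 : (2*(n:ℝ)-1)^E ≤ (2*(n:ℝ)-1)^(-1 : ℝ) :=
        Real.rpow_le_rpow_of_exponent_le hbR.le hE
      rw [Real.rpow_neg_one] at h1
      have h3 : (2*(n:ℝ)) * (2*(n:ℝ)-1)⁻¹ ≤ 2 := by
        rw [mul_inv_le_iff₀ hbpos]
        linarith
      have h4 : (2*(n:ℝ)) * (2*(n:ℝ)-1)^E ≤ (2*(n:ℝ)) * (2*(n:ℝ)-1)⁻¹ :=
        mul_le_mul_of_nonneg_left h1 (by linarith)
      push_cast
      linarith
  · -- main construction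
    push_neg at hE
    have hd9 : 9 ≤ d := by
      have : (8:ℝ) < (d:ℝ) := by
        rw [hEdef] at hE
        linarith
      exact_mod_cast this
    have hd13 : (1:ℝ) < (d:ℝ)/3 := by
      have : (9:ℝ) ≤ (d:ℝ) := by exact_mod_cast hd9
      linarith
    have hL0 : 0 < L := Real.logb_pos hbR hd13
    set c : ℕ := Nat.clog q (2*d) with hcdef
    have hclow : 2*d ≤ q^c := Nat.le_pow_clog hq1 _
    have hcpos : 0 < c := Nat.clog_pos hq1 (by omega)
    have hcpred : q^(c-1) < 2*d := Nat.pow_pred_clog_lt_self hq1 (by omega)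
    -- real bound on c
    have hcL : (c:ℝ) ≤ L + 3 := by
      have h0 : ((q:ℝ))^(((c - 1 : ℕ)):ℝ) < ((2*d : ℕ):ℝ) := by
        rw [Real.rpow_natCast]
        exact_mod_cast hcpred
      have h0' : ((c:ℝ) - 1) < Real.logb (2*(n:ℝ)-1) (2*(d:ℝ)) := by
        rw [Real.lt_logb_iff_rpow_lt hbR (by linarith)]
        have hcast : (((c - 1 : ℕ)):ℝ) = (c:ℝ) - 1 := by
          have : 1 ≤ c := hcpos
          push_cast [this]
          ring
        rw [← hcast, ← hqR]
        calc (q:ℝ) ^ (((c-1:ℕ)):ℝ) < ((2*d : ℕ):ℝ) := h0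
          _ = 2*(d:ℝ) := by push_cast; ring
      have hsplit : Real.logb (2*(n:ℝ)-1) (2*(d:ℝ)) = L + Real.logb (2*(n:ℝ)-1) 6 := by
        rw [hLdef]
        rw [show (2*(d:ℝ)) = ((d:ℝ)/3) * 6 by ring]
        rw [Real.logb_mul (by linarith) (by norm_num)]
      have h6 : Real.logb (2*(n:ℝ)-1) 6 ≤ 2 := by
        rw [Real.logb_le_iff_le_rpow hbR (by norm_num)]
        have hrw : (2*(n:ℝ)-1)^(2:ℝ) = (2*(n:ℝ)-1)^(2:ℕ) := by
          rw [← Real.rpow_natCast (2*(n:ℝ)-1) 2]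
          norm_num
        rw [hrw]
        nlinarith
      rw [hsplit] at h0'
      linarith
    have hc3d : c + 3 ≤ d := by
      have hr : (c:ℝ) + 3 < (d:ℝ) := by
        rw [hEdef] at hE
        linarith
      have hr2 : c + 3 < d := by exact_mod_cast hr
      omega
    obtain ⟨m, hm⟩ := hdeven
    set ℓ : ℕ := (d - c)/3 with hℓdef
    set k : ℕ := d/2 - ℓ with hkdef
    have hdiv3 : 3*ℓ ≤ d - c ∧ d - c < 3*ℓ + 3 := by
      constructor <;> omega
    have hℓ1 : 1 ≤ ℓ := by omega
    have hℓd : 2*ℓ + 2 ≤ d := by omega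
    have hℓk : 2*(ℓ+k) = d := by omega
    have h2k : c + ℓ ≤ 2*k := by omega
    -- balance condition
    have hbal : 2 * ℓ * Fintype.card ((α × Bool) × (Fin (ℓ - 1) → Fin q))
        ≤ (Fintype.card (Fin k → Fin q))^2 := by
      rw [DDCaux.cardPar hcard, DDCaux.cardT]
      have hsucc : q^(ℓ-1) * q = q^ℓ := by
        rw [← pow_succ]
        congr 1
        omega
      calc 2*ℓ*(2*n*q^(ℓ-1)) ≤ 2*ℓ*(2*q*q^(ℓ-1)) := by
            apply Nat.mul_le_mul_left
            apply Nat.mul_le_mul_right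
            omega
        _ = 4*ℓ*q^ℓ := by rw [← hsucc]; ring
        _ ≤ 2*d*q^ℓ := Nat.mul_le_mul_right _ (by omega)
        _ ≤ q^c*q^ℓ := Nat.mul_le_mul_right _ hclow
        _ = q^(c+ℓ) := (pow_add q c ℓ).symm
        _ ≤ q^(2*k) := Nat.pow_le_pow_right hposq h2k
        _ = (q^k)^2 := by rw [← pow_mul, mul_comm]
    have h2P : 2 ≤ Fintype.card ((α × Bool) × (Fin (ℓ - 1) → Fin q)) := by
      rw [DDCaux.cardPar hcard]
      have h1 : 1 ≤ q^(ℓ-1) := Nat.one_le_pow _ _ hposq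
      calc 2 ≤ 2*n := by omega
        _ = 2*n*1 := by ring
        _ ≤ 2*n*q^(ℓ-1) := Nat.mul_le_mul_left _ h1
    obtain ⟨D, hDDC, hnorm, hcardD⟩ :=
      DDCaux.construction (e := e) (k := k) hℓ1 hposq he hinj h2P hbal
    refine ⟨↑D, ?_, ?_, ?_⟩
    · intro g hg h hh g' hg' h' hh' h1 h2 h3
      exact hDDC g hg h hh g' hg' h' hh' h1 h2 h3
    · intro g hg h hh
      calc (g⁻¹*h).norm ≤ (g⁻¹).norm + h.norm := FreeGroup.norm_mul_le _ _
        _ = g.norm + h.norm := by rw [FreeGroup.norm_inv_eq]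
        _ = (ℓ+k) + (ℓ+k) := by rw [hnorm g hg, hnorm h hh]
        _ ≤ d := by omega
    · rw [Set.ncard_coe_finset]
      rw [DDCaux.cardPar hcard] at hcardD
      -- pass to the reals
      have hDR : (n:ℝ) * (2*(n:ℝ)-1)^(((ℓ - 1 : ℕ)):ℝ) ≤ (D.card : ℝ) := by
        have hc : ((2*n*q^(ℓ-1) : ℕ):ℝ) ≤ ((2*D.card : ℕ):ℝ) := by exact_mod_cast hcardD
        have hq' : ((q^(ℓ-1) : ℕ):ℝ) = (2*(n:ℝ)-1)^(((ℓ-1:ℕ)):ℝ) := by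
          rw [Real.rpow_natCast, ← hqR]
          push_cast
          ring
        push_cast at hc
        rw [show ((q:ℝ))^((ℓ-1:ℕ)) = (2*(n:ℝ)-1)^(((ℓ-1:ℕ)):ℝ) by
          rw [Real.rpow_natCast, hqR]] at hc
        linarith
      have hcastℓ : (((ℓ - 1 : ℕ)):ℝ) = (ℓ:ℝ) - 1 := by
        push_cast [hℓ1]
        ring
      rw [hcastℓ] at hDR
      -- exponent comparison
      have h3ℓ : (d:ℝ) ≤ 3*(ℓ:ℝ) + (c:ℝ) + 2 := by
        have : d ≤ 3*ℓ + c + 2 := by omega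
        exact_mod_cast this
      have hE2 : E + 1 ≤ (ℓ:ℝ) - 1 := by
        rw [hEdef]
        linarith
      -- final chain
      have p1 : (0:ℝ) < (2*(n:ℝ)-1)^E := Real.rpow_pos_of_pos hbpos _
      have p3 : (2*(n:ℝ)-1)^(E+1) = (2*(n:ℝ)-1)^E * (2*(n:ℝ)-1) := by
        rw [Real.rpow_add_one (by linarith : (2*(n:ℝ)-1) ≠ 0)]
      have p4 : (2*(n:ℝ)-1)^(E+1) ≤ (2*(n:ℝ)-1)^((ℓ:ℝ)-1) :=
        Real.rpow_le_rpow_of_exponent_le hbR.le (by linarith)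
      have p2 : (2:ℝ) ≤ 2*(n:ℝ)-1 := by linarith
      calc (2*(n:ℝ)) * (2*(n:ℝ)-1)^E = (n:ℝ)*((2*(n:ℝ)-1)^E * 2) := by ring
        _ ≤ (n:ℝ)*((2*(n:ℝ)-1)^E * (2*(n:ℝ)-1)) := by
            apply mul_le_mul_of_nonneg_left _ (by linarith)
            exact mul_le_mul_of_nonneg_left p2 p1.le
        _ = (n:ℝ)*(2*(n:ℝ)-1)^(E+1) := by rw [p3]
        _ ≤ (n:ℝ)*(2*(n:ℝ)-1)^((ℓ:ℝ)-1) := mul_le_mul_of_nonneg_left p4 (by linarith)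
        _ ≤ (D.card : ℝ) := hDR
end
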